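/- arXiv:1009.4535 — 2 statements merged into one kernel-verified Lean document; each statement's English description precedes it below -/
import Mathlib

section
/- For all integers n ≥ 1 and 0 ≤ k ≤ n-1, the number of partial matchings of [n+k-1] with exactly k arcs avoiding neighbor alignments, left nestings and right nestings equals the binomial coefficient C( (n-k)(n-k+1)/2 + k - 1, k ), i.e. R(n+k-1, k) = C( C(n-k+1, 2) + k - 1, k ). -/
open Finset

/-- `(i, j)` is an arc of the linear representation of the set partition `P` of
`{1, ..., n}`: `i < j`, both lie in the same block, and no element of that block
lies strictly between them. -/
def IsArc {n : ℕ} (P : Finpartition (Finset.Icc 1 n)) (a : ℕ × ℕ) : Prop :=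
  a.1 < a.2 ∧ ∃ B ∈ P.parts, a.1 ∈ B ∧ a.2 ∈ B ∧ ∀ c ∈ B, ¬ (a.1 < c ∧ c < a.2)

/-- The number of arcs of a set partition. -/
noncomputable def numArcs {n : ℕ} (P : Finpartition (Finset.Icc 1 n)) : ℕ :=
  {a : ℕ × ℕ | IsArc P a}.ncard

/-- A partial matching: every block has at most two elements. -/
def IsMatching {n : ℕ} (P : Finpartition (Finset.Icc 1 n)) : Prop :=
  ∀ B ∈ P.parts, B.card ≤ 2

/-- A neighbor alignment: arcs `(i₁, j₁)`, `(i₂, j₂)` with `i₁ < j₁ < i₂ < j₂`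
and `j₁ + 1 = i₂`. -/
def HasNbrAlign {n : ℕ} (P : Finpartition (Finset.Icc 1 n)) : Prop :=
  ∃ a b : ℕ × ℕ, IsArc P a ∧ IsArc P b ∧ a.2 + 1 = b.1

/-- A left nesting: arcs `(i₁, j₁)`, `(i₂, j₂)` with `i₁ < i₂ < j₂ < j₁`
and `i₁ + 1 = i₂`. -/
def HasLeftNesting {n : ℕ} (P : Finpartition (Finset.Icc 1 n)) : Prop :=
  ∃ a b : ℕ × ℕ, IsArc P a ∧ IsArc P b ∧ a.1 + 1 = b.1 ∧ b.2 < a.2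

/-- A right nesting: arcs `(i₁, j₁)`, `(i₂, j₂)` with `i₁ < i₂ < j₂ < j₁`
and `j₂ + 1 = j₁`. -/
def HasRightNesting {n : ℕ} (P : Finpartition (Finset.Icc 1 n)) : Prop :=
  ∃ a b : ℕ × ℕ, IsArc P a ∧ IsArc P b ∧ a.1 < b.1 ∧ b.2 + 1 = a.2

/-- The number of left crossings: pairs of arcs `(i₁, j₁)`, `(i₂, j₂)` with
`i₁ < i₂ < j₁ < j₂` and `i₁ + 1 = i₂`. -/
noncomputable def numLeftCrossings {n : ℕ} (P : Finpartition (Finset.Icc 1 n)) : ℕ :=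
  {p : (ℕ × ℕ) × (ℕ × ℕ) |
    IsArc P p.1 ∧ IsArc P p.2 ∧ p.1.1 + 1 = p.2.1 ∧ p.2.1 < p.1.2 ∧ p.1.2 < p.2.2}.ncard

/-- The number of transients: elements of a block that are neither the minimum
nor the maximum of their block. -/
noncomputable def numTransients {n : ℕ} (P : Finpartition (Finset.Icc 1 n)) : ℕ :=
  {x : ℕ | ∃ B ∈ P.parts, x ∈ B ∧ (∃ y ∈ B, y < x) ∧ (∃ y ∈ B, x < y)}.ncard

/-- `Pnum n k`: the number of partial matchings of `[n]` with exactly `k` arcs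
and no neighbor alignments. -/
noncomputable def Pnum (n k : ℕ) : ℕ :=
  {P : Finpartition (Finset.Icc 1 n) |
    IsMatching P ∧ numArcs P = k ∧ ¬ HasNbrAlign P}.ncard

/-- `Qnum n k`: the number of partial matchings of `[n]` with exactly `k` arcs,
no neighbor alignments and no left nestings. -/
noncomputable def Qnum (n k : ℕ) : ℕ :=
  {P : Finpartition (Finset.Icc 1 n) |
    IsMatching P ∧ numArcs P = k ∧ ¬ HasNbrAlign P ∧ ¬ HasLeftNesting P}.ncard

/-- `Rnum n k`: the number of partial matchings of `[n]` with exactly `k` arcs,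
no neighbor alignments, no left nestings and no right nestings. -/
noncomputable def Rnum (n k : ℕ) : ℕ :=
  {P : Finpartition (Finset.Icc 1 n) |
    IsMatching P ∧ numArcs P = k ∧ ¬ HasNbrAlign P ∧ ¬ HasLeftNesting P ∧
      ¬ HasRightNesting P}.ncard

/-- `Tnum n k`: the number of set partitions of `[n]` with exactly `k` arcs and
no right nestings. -/
noncomputable def Tnum (n k : ℕ) : ℕ :=
  {P : Finpartition (Finset.Icc 1 n) | numArcs P = k ∧ ¬ HasRightNesting P}.ncard

/-- `Stirling m b`: the Stirling number of the second kind, the number of set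
partitions of `{1, ..., m}` into `b` blocks. -/
noncomputable def Stirling (m b : ℕ) : ℕ :=
  {P : Finpartition (Finset.Icc 1 m) | P.parts.card = b}.ncard


namespace Stmt9

/-! ### Counts and positions determined by a multiset of gap-pairs -/

/-- number of pairs whose left gap is `g` -/
def lct (μ : Multiset (ℕ × ℕ)) (g : ℕ) : ℕ := (μ.filter (fun e => e.1 = g)).card
/-- number of pairs whose right gap is `g` -/
def rct (μ : Multiset (ℕ × ℕ)) (g : ℕ) : ℕ := (μ.filter (fun e => e.2 = g)).card
/-- start position of gap `g` -/
def gst (μ : Multiset (ℕ × ℕ)) (g : ℕ) : ℕ := 1 + g + ∑ h ∈ Finset.range g, (lct μ h + rct μ h)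
/-- offset of the copies of `e` among left endpoints in gap `e.1` -/
def lofs (μ : Multiset (ℕ × ℕ)) (e : ℕ × ℕ) : ℕ :=
  (μ.filter (fun f => f.1 = e.1 ∧ f.2 < e.2)).card
/-- offset of the copies of `e` among endpoints in gap `e.2` -/
def rofs (μ : Multiset (ℕ × ℕ)) (e : ℕ × ℕ) : ℕ :=
  lct μ e.2 + (μ.filter (fun f => f.2 = e.2 ∧ f.1 < e.1)).card
/-- position of the left endpoint of the `j`-th copy of `e` -/
def lpos (μ : Multiset (ℕ × ℕ)) (e : ℕ × ℕ) (j : ℕ) : ℕ := gst μ e.1 + lofs μ e + j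
/-- position of the right endpoint of the `j`-th copy of `e` -/
def rpos (μ : Multiset (ℕ × ℕ)) (e : ℕ × ℕ) (j : ℕ) : ℕ := gst μ e.2 + rofs μ e + j

lemma lofs_add_count (μ : Multiset (ℕ × ℕ)) (e : ℕ × ℕ) :
    lofs μ e + μ.count e = (μ.filter (fun f => f.1 = e.1 ∧ f.2 ≤ e.2)).card := by
  classical
  have h := Multiset.filter_add_not (fun f : ℕ × ℕ => f.2 < e.2)
    (μ.filter (fun f => f.1 = e.1 ∧ f.2 ≤ e.2))
  have h1 : (μ.filter (fun f => f.1 = e.1 ∧ f.2 ≤ e.2)).filter (fun f : ℕ × ℕ => f.2 < e.2)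
      = μ.filter (fun f => f.1 = e.1 ∧ f.2 < e.2) := by
    rw [Multiset.filter_filter]
    exact Multiset.filter_congr (fun x _ => by constructor <;> (intro h; omega))
  have h2 : (μ.filter (fun f => f.1 = e.1 ∧ f.2 ≤ e.2)).filter (fun f : ℕ × ℕ => ¬ f.2 < e.2)
      = μ.filter (e = ·) := by
    rw [Multiset.filter_filter]
    refine Multiset.filter_congr (fun x _ => ?_)
    constructor
    · rintro ⟨h3, h1, h2⟩
      have : x.2 = e.2 := by omega
      exact (Prod.ext h1.symm this.symm)
    · rintro rfl; exact ⟨by omega, rfl, le_refl _⟩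
  have := congrArg Multiset.card h
  rw [Multiset.card_add, h1, h2] at this
  rw [lofs, Multiset.count_eq_card_filter_eq]
  omega

lemma rofs_add_count (μ : Multiset (ℕ × ℕ)) (e : ℕ × ℕ) (he : e.1 ≤ e.2) :
    rofs μ e + μ.count e = lct μ e.2 + (μ.filter (fun f => f.2 = e.2 ∧ f.1 ≤ e.1)).card := by
  classical
  have h := Multiset.filter_add_not (fun f : ℕ × ℕ => f.1 < e.1)
    (μ.filter (fun f => f.2 = e.2 ∧ f.1 ≤ e.1))
  have h1 : (μ.filter (fun f => f.2 = e.2 ∧ f.1 ≤ e.1)).filter (fun f : ℕ × ℕ => f.1 < e.1)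
      = μ.filter (fun f => f.2 = e.2 ∧ f.1 < e.1) := by
    rw [Multiset.filter_filter]
    exact Multiset.filter_congr (fun x _ => by constructor <;> (intro h; omega))
  have h2 : (μ.filter (fun f => f.2 = e.2 ∧ f.1 ≤ e.1)).filter (fun f : ℕ × ℕ => ¬ f.1 < e.1)
      = μ.filter (e = ·) := by
    rw [Multiset.filter_filter]
    refine Multiset.filter_congr (fun x _ => ?_)
    constructor
    · rintro ⟨h3, h1, h2⟩
      have : x.1 = e.1 := by omega
      exact (Prod.ext this.symm h1.symm)
    · rintro rfl; exact ⟨by omega, rfl, le_refl _⟩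
  have := congrArg Multiset.card h
  rw [Multiset.card_add, h1, h2] at this
  rw [rofs, Multiset.count_eq_card_filter_eq]
  omega

lemma lofs_add_count_le (μ : Multiset (ℕ × ℕ)) (e : ℕ × ℕ) :
    lofs μ e + μ.count e ≤ lct μ e.1 := by
  rw [lofs_add_count, lct]
  exact Multiset.card_le_card (Multiset.monotone_filter_right μ (fun x hx => hx.1))

lemma lofs_mono (μ : Multiset (ℕ × ℕ)) (e e' : ℕ × ℕ) (h1 : e.1 = e'.1) (h2 : e.2 < e'.2) :
    lofs μ e + μ.count e ≤ lofs μ e' := by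
  rw [lofs_add_count, lofs]
  exact Multiset.card_le_card (Multiset.monotone_filter_right μ
    (fun x hx => ⟨hx.1.trans h1, by omega⟩))

lemma rofs_ge (μ : Multiset (ℕ × ℕ)) (e : ℕ × ℕ) : lct μ e.2 ≤ rofs μ e := Nat.le_add_right _ _

lemma rofs_add_count_le (μ : Multiset (ℕ × ℕ)) (e : ℕ × ℕ) (he : e.1 ≤ e.2) :
    rofs μ e + μ.count e ≤ lct μ e.2 + rct μ e.2 := by
  rw [rofs_add_count μ e he, rct]
  have := Multiset.card_le_card (Multiset.monotone_filter_right μ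
    (fun (x : ℕ × ℕ) (hx : x.2 = e.2 ∧ x.1 ≤ e.1) => hx.1))
  omega

lemma rofs_mono (μ : Multiset (ℕ × ℕ)) (e e' : ℕ × ℕ) (h1 : e.2 = e'.2) (h2 : e.1 < e'.1)
    (he : e.1 ≤ e.2) :
    rofs μ e + μ.count e ≤ rofs μ e' := by
  rw [rofs_add_count μ e he, rofs, ← h1]
  have := Multiset.card_le_card (Multiset.monotone_filter_right μ
    (fun (x : ℕ × ℕ) (hx : x.2 = e.2 ∧ x.1 ≤ e.1) => (⟨hx.1, by omega⟩ : x.2 = e.2 ∧ x.1 < e'.1)))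
  omega

lemma gst_succ (μ : Multiset (ℕ × ℕ)) (g : ℕ) :
    gst μ (g + 1) = gst μ g + (lct μ g + rct μ g) + 1 := by
  rw [gst, gst, Finset.sum_range_succ]; ring

lemma gst_mono (μ : Multiset (ℕ × ℕ)) {g g' : ℕ} (h : g < g') :
    gst μ g + (lct μ g + rct μ g) + 1 ≤ gst μ g' := by
  rw [← gst_succ]
  rw [gst, gst]
  have : Finset.range (g+1) ⊆ Finset.range g' := by
    intro x hx; simp only [Finset.mem_range] at *; omega
  have h2 : ∑ h ∈ Finset.range (g+1), (lct μ h + rct μ h)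
      ≤ ∑ h ∈ Finset.range g', (lct μ h + rct μ h) := Finset.sum_le_sum_of_subset this
  omega


/-! ### The arc set determined by a multiset of gap-pairs -/

/-- the set of arcs (as pairs of positions) encoded by the multiset `μ` -/
def arcsOf (μ : Multiset (ℕ × ℕ)) : Finset (ℕ × ℕ) :=
  μ.toFinset.biUnion fun e =>
    (Finset.range (μ.count e)).image fun j => (lpos μ e j, rpos μ e j)

/-- goodness of the multiset of gap-pairs -/
def Good (t : ℕ) (μ : Multiset (ℕ × ℕ)) : Prop := ∀ e ∈ μ, e.1 ≤ e.2 ∧ e.2 < t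

lemma mem_arcsOf {μ : Multiset (ℕ × ℕ)} {a : ℕ × ℕ} :
    a ∈ arcsOf μ ↔ ∃ e ∈ μ, ∃ j < μ.count e, a = (lpos μ e j, rpos μ e j) := by
  simp only [arcsOf, Finset.mem_biUnion, Multiset.mem_toFinset, Finset.mem_image,
    Finset.mem_range]
  constructor
  · rintro ⟨e, he, j, hj, rfl⟩; exact ⟨e, he, j, hj, rfl⟩
  · rintro ⟨e, he, j, hj, rfl⟩; exact ⟨e, he, j, hj, rfl⟩

lemma lzone {μ : Multiset (ℕ × ℕ)} {e : ℕ × ℕ} {j : ℕ} (hj : j < μ.count e) :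
    gst μ e.1 ≤ lpos μ e j ∧ lpos μ e j < gst μ e.1 + lct μ e.1 := by
  have := lofs_add_count_le μ e
  constructor
  · rw [lpos]; omega
  · rw [lpos]; omega

lemma rzone {μ : Multiset (ℕ × ℕ)} {e : ℕ × ℕ} {j : ℕ} (hj : j < μ.count e) (he : e.1 ≤ e.2) :
    gst μ e.2 + lct μ e.2 ≤ rpos μ e j ∧ rpos μ e j < gst μ e.2 + (lct μ e.2 + rct μ e.2) := by
  have h1 := rofs_add_count_le μ e he
  have h2 := rofs_ge μ e
  constructor
  · rw [rpos]; omega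
  · rw [rpos]; omega

/-- if a position lies in the zones of gaps `g` and `g'` then `g = g'` -/
lemma zone_eq {μ : Multiset (ℕ × ℕ)} {g g' x : ℕ}
    (h1 : gst μ g ≤ x) (h2 : x < gst μ g + (lct μ g + rct μ g))
    (h1' : gst μ g' ≤ x) (h2' : x < gst μ g' + (lct μ g' + rct μ g')) : g = g' := by
  rcases lt_trichotomy g g' with h | h | h
  · have := gst_mono μ h; omega
  · exact h
  · have := gst_mono μ h; omega

lemma lpos_lt_rpos {μ : Multiset (ℕ × ℕ)} {e e' : ℕ × ℕ} {j j' : ℕ}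
    (hj : j < μ.count e) (hj' : j' < μ.count e') (he : e.1 ≤ e.2) (he' : e'.1 ≤ e'.2)
    (hle : e'.1 ≤ e.2) :
    lpos μ e' j' < rpos μ e j := by
  have hl := lzone (μ := μ) hj'
  have hr := rzone (μ := μ) hj he
  rcases Nat.lt_or_ge e'.1 e.2 with h | h
  · have := gst_mono μ h
    have : gst μ e'.1 + (lct μ e'.1 + rct μ e'.1) < gst μ e.2 := by omega
    omega
  · have : e'.1 = e.2 := le_antisymm hle h
    rw [this] at hl
    omega

lemma lpos_inj {μ : Multiset (ℕ × ℕ)} {e e' : ℕ × ℕ} {j j' : ℕ}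
    (he : e ∈ μ) (he' : e' ∈ μ) (hj : j < μ.count e) (hj' : j' < μ.count e')
    (h : lpos μ e j = lpos μ e' j') : e = e' ∧ j = j' := by
  have hz := lzone (μ := μ) hj
  have hz' := lzone (μ := μ) hj'
  have hp : e.1 = e'.1 := by
    refine zone_eq (μ := μ) hz.1 (by omega) (by omega) (by omega)
  have hq : e.2 = e'.2 := by
    rcases lt_trichotomy e.2 e'.2 with hqq | hqq | hqq
    · have := lofs_mono μ e e' hp hqq
      rw [lpos, lpos, hp] at h
      omega
    · exact hqq
    · have := lofs_mono μ e' e hp.symm hqq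
      rw [lpos, lpos, hp] at h
      omega
  have : e = e' := Prod.ext hp hq
  subst this
  rw [lpos, lpos] at h
  exact ⟨rfl, by omega⟩

lemma rpos_inj {μ : Multiset (ℕ × ℕ)} {e e' : ℕ × ℕ} {j j' : ℕ}
    (he : e.1 ≤ e.2) (he' : e'.1 ≤ e'.2) (hj : j < μ.count e) (hj' : j' < μ.count e')
    (h : rpos μ e j = rpos μ e' j') : e = e' ∧ j = j' := by
  have hz := rzone (μ := μ) hj he
  have hz' := rzone (μ := μ) hj' he'
  have hp : e.2 = e'.2 := by
    refine zone_eq (μ := μ) (x := rpos μ e j) (by omega) (by omega) (by omega) (by omega)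
  have hq : e.1 = e'.1 := by
    rcases lt_trichotomy e.1 e'.1 with hqq | hqq | hqq
    · have := rofs_mono μ e e' hp hqq he
      rw [rpos, rpos, hp] at h
      omega
    · exact hqq
    · have := rofs_mono μ e' e hp.symm hqq he'
      rw [rpos, rpos, hp] at h
      omega
  have : e = e' := Prod.ext hq hp
  subst this
  rw [rpos, rpos] at h
  exact ⟨rfl, by omega⟩

lemma lpos_ne_rpos {μ : Multiset (ℕ × ℕ)} {e e' : ℕ × ℕ} {j j' : ℕ}
    (hj : j < μ.count e) (hj' : j' < μ.count e') (he' : e'.1 ≤ e'.2) :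
    lpos μ e j ≠ rpos μ e' j' := by
  intro h
  have hz := lzone (μ := μ) hj
  have hz' := rzone (μ := μ) hj' he'
  have hp : e.1 = e'.2 := by
    refine zone_eq (μ := μ) hz.1 (by omega) ?_ ?_
    · rw [h]; omega
    · rw [h]; omega
  rw [hp] at hz
  omega

lemma card_arcsOf {t : ℕ} {μ : Multiset (ℕ × ℕ)} (hg : Good t μ) :
    (arcsOf μ).card = Multiset.card μ := by
  rw [arcsOf, Finset.card_biUnion]
  · have : ∀ e ∈ μ.toFinset,
        ((Finset.range (μ.count e)).image fun j => (lpos μ e j, rpos μ e j)).card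
        = μ.count e := by
      intro e he
      rw [Finset.card_image_of_injOn, Finset.card_range]
      intro j hj j' hj' hjj
      simp only [Finset.mem_coe, Finset.mem_range] at hj hj'
      have := congrArg Prod.fst hjj
      simp only [lpos] at this
      omega
    rw [Finset.sum_congr rfl this]
    exact (Multiset.toFinset_sum_count_eq μ)
  · intro e he e' he' hne
    simp only [Finset.mem_coe, Multiset.mem_toFinset] at he he'
    rw [Function.onFun, Finset.disjoint_left]
    rintro a ha ha'
    simp only [Finset.mem_image, Finset.mem_range] at ha ha'
    obtain ⟨j, hj, rfl⟩ := ha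
    obtain ⟨j', hj', h⟩ := ha'
    have := congrArg Prod.fst h
    simp only [lpos] at this
    exact hne ((lpos_inj he he' hj hj' this.symm).1)


lemma gst_le {μ : Multiset (ℕ × ℕ)} {g g' : ℕ} (h : g ≤ g') : gst μ g ≤ gst μ g' := by
  rcases Nat.eq_or_lt_of_le h with rfl | h
  · exact le_refl _
  · have := gst_mono μ h; omega

lemma sum_card_filter {α : Type*} (ν : Multiset α) (f : α → ℕ) (T : ℕ) :
    ∑ h ∈ Finset.range T, (ν.filter (fun x => f x = h)).card
      = (ν.filter (fun x => f x < T)).card := by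
  classical
  induction T with
  | zero =>
    rw [Finset.range_zero, Finset.sum_empty, Multiset.filter_eq_nil.2 (by simp)]
    rfl
  | succ T ih =>
    rw [Finset.sum_range_succ, ih]
    have h := Multiset.filter_add_not (fun x => f x < T) (ν.filter (fun x => f x < T + 1))
    have h1 : (ν.filter (fun x => f x < T + 1)).filter (fun x => f x < T)
        = ν.filter (fun x => f x < T) := by
      rw [Multiset.filter_filter]
      exact Multiset.filter_congr (fun x _ => by constructor <;> (intro h; omega))
    have h2 : (ν.filter (fun x => f x < T + 1)).filter (fun x => ¬ f x < T)
        = ν.filter (fun x => f x = T) := by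
      rw [Multiset.filter_filter]
      exact Multiset.filter_congr (fun x _ => by constructor <;> (intro h; omega))
    have := congrArg Multiset.card h
    rw [Multiset.card_add, h1, h2] at this
    omega

lemma gst_total {t : ℕ} {μ : Multiset (ℕ × ℕ)} (hg : Good t μ) :
    gst μ t = 1 + t + 2 * Multiset.card μ := by
  have hl : ∑ h ∈ Finset.range t, lct μ h = Multiset.card μ := by
    rw [show (fun h => lct μ h) = fun h => (μ.filter (fun x => x.1 = h)).card from rfl]
    rw [sum_card_filter μ Prod.fst t]
    congr 1
    exact Multiset.filter_eq_self.mpr (fun e he => lt_of_le_of_lt (hg e he).1 (hg e he).2)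
  have hr : ∑ h ∈ Finset.range t, rct μ h = Multiset.card μ := by
    rw [show (fun h => rct μ h) = fun h => (μ.filter (fun x => x.2 = h)).card from rfl]
    rw [sum_card_filter μ Prod.snd t]
    congr 1
    exact Multiset.filter_eq_self.mpr (fun e he => (hg e he).2)
  rw [gst, Finset.sum_add_distrib, hl, hr]
  ring

lemma arcsOf_lt {t : ℕ} {μ : Multiset (ℕ × ℕ)} (hg : Good t μ) {a : ℕ × ℕ}
    (ha : a ∈ arcsOf μ) : a.1 < a.2 := by
  obtain ⟨e, he, j, hj, rfl⟩ := mem_arcsOf.1 ha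
  exact lpos_lt_rpos hj hj (hg e he).1 (hg e he).1 (hg e he).1

lemma arcsOf_bounds {t : ℕ} {μ : Multiset (ℕ × ℕ)} (hg : Good t μ) (ht : 1 ≤ t) {a : ℕ × ℕ}
    (ha : a ∈ arcsOf μ) : 1 ≤ a.1 ∧ a.2 ≤ t - 1 + 2 * Multiset.card μ := by
  obtain ⟨e, he, j, hj, rfl⟩ := mem_arcsOf.1 ha
  constructor
  · have : 1 ≤ gst μ e.1 := by rw [gst]; omega
    simp only [lpos]; omega
  · have h1 := (rzone (μ := μ) hj (hg e he).1).2
    have h2 := gst_succ μ e.2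
    have h3 : gst μ (e.2 + 1) ≤ gst μ t := gst_le (hg e he).2
    have h4 := gst_total hg
    simp only; omega

lemma arcsOf_disj {t : ℕ} {μ : Multiset (ℕ × ℕ)} (hg : Good t μ) {a b : ℕ × ℕ}
    (ha : a ∈ arcsOf μ) (hb : b ∈ arcsOf μ) (hne : a ≠ b) :
    a.1 ≠ b.1 ∧ a.1 ≠ b.2 ∧ a.2 ≠ b.1 ∧ a.2 ≠ b.2 := by
  obtain ⟨e, he, j, hj, rfl⟩ := mem_arcsOf.1 ha
  obtain ⟨e', he', j', hj', rfl⟩ := mem_arcsOf.1 hb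
  refine ⟨?_, ?_, ?_, ?_⟩
  · intro h
    obtain ⟨rfl, rfl⟩ := lpos_inj he he' hj hj' h
    exact hne rfl
  · exact lpos_ne_rpos hj hj' (hg e' he').1
  · exact fun h => (lpos_ne_rpos hj' hj (hg e he).1) h.symm
  · intro h
    obtain ⟨rfl, rfl⟩ := rpos_inj (hg e he).1 (hg e' he').1 hj hj' h
    exact hne rfl

lemma arcsOf_noAlign {t : ℕ} {μ : Multiset (ℕ × ℕ)} (hg : Good t μ) {a b : ℕ × ℕ}
    (ha : a ∈ arcsOf μ) (hb : b ∈ arcsOf μ) : a.2 + 1 ≠ b.1 := by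
  obtain ⟨e, he, j, hj, rfl⟩ := mem_arcsOf.1 ha
  obtain ⟨e', he', j', hj', rfl⟩ := mem_arcsOf.1 hb
  simp only
  have hz := rzone (μ := μ) hj (hg e he).1
  have hz' := lzone (μ := μ) hj'
  rcases lt_trichotomy e'.1 e.2 with h | h | h
  · have := gst_mono μ h; omega
  · rw [← h] at hz; omega
  · have := gst_mono μ h; omega

lemma arcsOf_noLeftNest {t : ℕ} {μ : Multiset (ℕ × ℕ)} (hg : Good t μ) {a b : ℕ × ℕ}
    (ha : a ∈ arcsOf μ) (hb : b ∈ arcsOf μ) : ¬ (a.1 + 1 = b.1 ∧ b.2 < a.2) := by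
  obtain ⟨e, he, j, hj, rfl⟩ := mem_arcsOf.1 ha
  obtain ⟨e', he', j', hj', rfl⟩ := mem_arcsOf.1 hb
  simp only
  rintro ⟨h1, h2⟩
  have hz := lzone (μ := μ) hj
  have hz' := lzone (μ := μ) hj'
  have hp : e.1 = e'.1 := by
    rcases lt_trichotomy e.1 e'.1 with h | h | h
    · have := gst_mono μ h; omega
    · exact h
    · have := gst_mono μ h; omega
  have hrz := rzone (μ := μ) hj (hg e he).1
  have hrz' := rzone (μ := μ) hj' (hg e' he').1
  rcases lt_trichotomy e.2 e'.2 with h | h | h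
  · have := gst_mono μ h; omega
  · have : e = e' := Prod.ext hp h
    subst this
    simp only [lpos] at h1
    have : j' = j + 1 := by omega
    subst this
    simp only [rpos] at h2
    omega
  · have := lofs_mono μ e' e hp.symm h
    simp only [lpos, hp] at h1
    omega

lemma arcsOf_noRightNest {t : ℕ} {μ : Multiset (ℕ × ℕ)} (hg : Good t μ) {a b : ℕ × ℕ}
    (ha : a ∈ arcsOf μ) (hb : b ∈ arcsOf μ) : ¬ (a.1 < b.1 ∧ b.2 + 1 = a.2) := by
  obtain ⟨e, he, j, hj, rfl⟩ := mem_arcsOf.1 ha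
  obtain ⟨e', he', j', hj', rfl⟩ := mem_arcsOf.1 hb
  simp only
  rintro ⟨h1, h2⟩
  have hrz := rzone (μ := μ) hj (hg e he).1
  have hrz' := rzone (μ := μ) hj' (hg e' he').1
  have hq : e.2 = e'.2 := by
    rcases lt_trichotomy e.2 e'.2 with h | h | h
    · have := gst_mono μ h; omega
    · exact h
    · have := gst_mono μ h; omega
  have hz := lzone (μ := μ) hj
  have hz' := lzone (μ := μ) hj'
  rcases lt_trichotomy e.1 e'.1 with h | h | h
  · have := rofs_mono μ e e' hq h (hg e he).1
    simp only [rpos, hq] at h2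
    omega
  · have : e = e' := Prod.ext h hq
    subst this
    simp only [rpos] at h2
    have : j = j' + 1 := by omega
    subst this
    simp only [lpos] at h1
    omega
  · have := gst_mono μ h; omega


/-! ### Building a partial matching from a finite set of arcs -/

def endpts (A : Finset (ℕ × ℕ)) : Finset ℕ := A.biUnion fun a => {a.1, a.2}

lemma mem_endpts {A : Finset (ℕ × ℕ)} {x : ℕ} :
    x ∈ endpts A ↔ ∃ a ∈ A, a.1 = x ∨ a.2 = x := by
  simp [endpts, eq_comm]

def blocksOf (mm : ℕ) (A : Finset (ℕ × ℕ)) : Finset (Finset ℕ) :=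
  A.image (fun a => ({a.1, a.2} : Finset ℕ)) ∪
    ((Finset.Icc 1 mm) \ endpts A).image (fun x => ({x} : Finset ℕ))

/-- arcs are within bounds -/
def ABdd (mm : ℕ) (A : Finset (ℕ × ℕ)) : Prop :=
  ∀ a ∈ A, a.1 < a.2 ∧ 1 ≤ a.1 ∧ a.2 ≤ mm

/-- arcs have pairwise distinct endpoints -/
def ADisj (A : Finset (ℕ × ℕ)) : Prop :=
  ∀ a ∈ A, ∀ b ∈ A, a ≠ b → a.1 ≠ b.1 ∧ a.1 ≠ b.2 ∧ a.2 ≠ b.1 ∧ a.2 ≠ b.2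

lemma blocksOf_cases {mm : ℕ} {A : Finset (ℕ × ℕ)} {B : Finset ℕ} (hB : B ∈ blocksOf mm A) :
    (∃ a ∈ A, B = {a.1, a.2}) ∨
      (∃ x ∈ Finset.Icc 1 mm, x ∉ endpts A ∧ B = {x}) := by
  rw [blocksOf, Finset.mem_union] at hB
  rcases hB with hB | hB
  · obtain ⟨a, ha, rfl⟩ := Finset.mem_image.1 hB
    exact Or.inl ⟨a, ha, rfl⟩
  · obtain ⟨x, hx, rfl⟩ := Finset.mem_image.1 hB
    rw [Finset.mem_sdiff] at hx
    exact Or.inr ⟨x, hx.1, hx.2, rfl⟩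

def mkP (mm : ℕ) (A : Finset (ℕ × ℕ)) (h1 : ABdd mm A) (h2 : ADisj A) :
    Finpartition (Finset.Icc 1 mm) where
  parts := blocksOf mm A
  supIndep := by
    rw [Finset.supIndep_iff_pairwiseDisjoint]
    intro B hB C hC hne
    simp only [Finset.mem_coe] at hB hC
    simp only [Function.id_def, Finset.disjoint_left]
    intro x hxB hxC
    rcases blocksOf_cases hB with ⟨a, ha, rfl⟩ | ⟨u, hu, hu2, rfl⟩ <;>
      rcases blocksOf_cases hC with ⟨b, hb, rfl⟩ | ⟨v, hv, hv2, rfl⟩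
    · rcases eq_or_ne a b with rfl | hab
      · exact hne rfl
      · have := h2 a ha b hb hab
        simp only [Finset.mem_insert, Finset.mem_singleton] at hxB hxC
        omega
    · simp only [Finset.mem_insert, Finset.mem_singleton] at hxB hxC
      subst hxC
      exact hv2 (mem_endpts.2 ⟨a, ha, by omega⟩)
    · simp only [Finset.mem_insert, Finset.mem_singleton] at hxB hxC
      subst hxB
      exact hu2 (mem_endpts.2 ⟨b, hb, by omega⟩)
    · simp only [Finset.mem_singleton] at hxB hxC
      subst hxB; subst hxC
      exact hne rfl
  sup_parts := by
    apply le_antisymm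
    · apply Finset.sup_le
      intro B hB
      rcases blocksOf_cases hB with ⟨a, ha, rfl⟩ | ⟨u, hu, hu2, rfl⟩
      · have := h1 a ha
        intro x hx
        simp only [id_eq, Finset.mem_insert, Finset.mem_singleton] at hx
        rw [Finset.mem_Icc]
        omega
      · intro x hx
        simp only [id_eq, Finset.mem_singleton] at hx
        subst hx
        exact hu
    · intro x hx
      rw [Finset.mem_sup]
      by_cases hxe : x ∈ endpts A
      · obtain ⟨a, ha, hae⟩ := mem_endpts.1 hxe
        refine ⟨{a.1, a.2}, ?_, by simp only [id_eq, Finset.mem_insert, Finset.mem_singleton]; omega⟩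
        rw [blocksOf, Finset.mem_union]
        exact Or.inl (Finset.mem_image_of_mem _ ha)
      · refine ⟨{x}, ?_, by simp only [id_eq]; exact Finset.mem_singleton_self x⟩
        rw [blocksOf, Finset.mem_union]
        refine Or.inr (Finset.mem_image_of_mem _ ?_)
        rw [Finset.mem_sdiff]
        exact ⟨hx, hxe⟩
  bot_notMem := by
    intro hB
    rcases blocksOf_cases hB with ⟨a, ha, h⟩ | ⟨u, hu, hu2, h⟩
    · exact absurd h.symm (Finset.insert_ne_empty _ _)
    · exact absurd h.symm (Finset.singleton_ne_empty _)

lemma isArc_mkP {mm : ℕ} {A : Finset (ℕ × ℕ)} {h1 : ABdd mm A} {h2 : ADisj A} {x : ℕ × ℕ} :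
    IsArc (mkP mm A h1 h2) x ↔ x ∈ A := by
  constructor
  · rintro ⟨hlt, B, hB, hx1, hx2, _⟩
    rcases blocksOf_cases hB with ⟨a, ha, rfl⟩ | ⟨u, hu, hu2, rfl⟩
    · simp only [Finset.mem_insert, Finset.mem_singleton] at hx1 hx2
      have hax := h1 a ha
      have : x = a := by
        have : x.1 = a.1 ∧ x.2 = a.2 := by omega
        exact Prod.ext this.1 this.2
      rwa [this]
    · simp only [Finset.mem_singleton] at hx1 hx2
      omega
  · intro hx
    refine ⟨(h1 x hx).1, {x.1, x.2}, ?_, by simp, by simp, ?_⟩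
    · rw [mkP]
      simp only []
      rw [blocksOf, Finset.mem_union]
      exact Or.inl (Finset.mem_image_of_mem _ hx)
    · intro c hc
      simp only [Finset.mem_insert, Finset.mem_singleton] at hc
      omega

lemma isMatching_mkP {mm : ℕ} {A : Finset (ℕ × ℕ)} {h1 : ABdd mm A} {h2 : ADisj A} :
    IsMatching (mkP mm A h1 h2) := by
  intro B hB
  rcases blocksOf_cases hB with ⟨a, ha, rfl⟩ | ⟨u, hu, hu2, rfl⟩
  · exact (Finset.card_insert_le _ _).trans (by simp)
  · simp

lemma numArcs_mkP {mm : ℕ} {A : Finset (ℕ × ℕ)} {h1 : ABdd mm A} {h2 : ADisj A} :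
    numArcs (mkP mm A h1 h2) = A.card := by
  rw [numArcs]
  have : {a : ℕ × ℕ | IsArc (mkP mm A h1 h2) a} = ↑A := by
    ext a
    simp only [Set.mem_setOf_eq, Finset.coe_mem, Finset.mem_coe]
    exact isArc_mkP
  rw [this, Set.ncard_coe_finset]


/-! ### Extracting data from a partial matching -/

lemma isArc_mem_Icc {mm : ℕ} {P : Finpartition (Finset.Icc 1 mm)} {a : ℕ × ℕ}
    (ha : IsArc P a) : a.1 ∈ Finset.Icc 1 mm ∧ a.2 ∈ Finset.Icc 1 mm := by
  obtain ⟨hlt, B, hB, h1, h2, _⟩ := ha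
  have := P.le hB
  exact ⟨this h1, this h2⟩

lemma arcSet_finite {mm : ℕ} (P : Finpartition (Finset.Icc 1 mm)) :
    {a : ℕ × ℕ | IsArc P a}.Finite := by
  apply Set.Finite.subset ((Finset.Icc 1 mm ×ˢ Finset.Icc 1 mm).finite_toSet)
  intro a ha
  have := isArc_mem_Icc ha
  simp only [Finset.coe_product, Set.mem_prod, Finset.mem_coe]
  exact ⟨this.1, this.2⟩

noncomputable def arcFin {mm : ℕ} (P : Finpartition (Finset.Icc 1 mm)) : Finset (ℕ × ℕ) :=
  (arcSet_finite P).toFinset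

lemma mem_arcFin {mm : ℕ} {P : Finpartition (Finset.Icc 1 mm)} {a : ℕ × ℕ} :
    a ∈ arcFin P ↔ IsArc P a := Set.Finite.mem_toFinset _

lemma numArcs_eq_card_arcFin {mm : ℕ} (P : Finpartition (Finset.Icc 1 mm)) :
    numArcs P = (arcFin P).card := by
  rw [numArcs, arcFin, ← Set.ncard_coe_finset, Set.Finite.coe_toFinset]

/-- for a matching, the block containing an arc is the unordered pair of endpoints -/
lemma block_of_arc {mm : ℕ} {P : Finpartition (Finset.Icc 1 mm)} (hP : IsMatching P)
    {a : ℕ × ℕ} (ha : IsArc P a) : ({a.1, a.2} : Finset ℕ) ∈ P.parts := by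
  obtain ⟨hlt, B, hB, h1, h2, _⟩ := ha
  have hcard : B.card ≤ 2 := hP B hB
  have hsub : ({a.1, a.2} : Finset ℕ) ⊆ B := by
    intro x hx
    simp only [Finset.mem_insert, Finset.mem_singleton] at hx
    rcases hx with rfl | rfl
    exacts [h1, h2]
  have h2card : ({a.1, a.2} : Finset ℕ).card = 2 := Finset.card_pair (by omega)
  have hBE : ({a.1, a.2} : Finset ℕ) = B := Finset.eq_of_subset_of_card_le hsub (by omega)
  rwa [hBE]

lemma isArc_of_block {mm : ℕ} {P : Finpartition (Finset.Icc 1 mm)} {x y : ℕ}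
    (hxy : x < y) (hB : ({x, y} : Finset ℕ) ∈ P.parts) : IsArc P (x, y) := by
  refine ⟨hxy, {x, y}, hB, by simp, by simp, ?_⟩
  intro c hc
  simp only [Finset.mem_insert, Finset.mem_singleton] at hc
  omega

/-- arcs sharing an endpoint are equal -/
lemma arc_unique {mm : ℕ} {P : Finpartition (Finset.Icc 1 mm)} (hP : IsMatching P)
    {a b : ℕ × ℕ} (ha : IsArc P a) (hb : IsArc P b)
    (h : a.1 = b.1 ∨ a.1 = b.2 ∨ a.2 = b.1 ∨ a.2 = b.2) : a = b := by
  have hBa := block_of_arc hP ha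
  have hBb := block_of_arc hP hb
  have hseteq : ({a.1, a.2} : Finset ℕ) = {b.1, b.2} := by
    by_contra hne
    have hd := P.disjoint hBa hBb hne
    rw [Function.onFun, Finset.disjoint_left] at hd
    simp only [id_eq] at hd
    rcases h with h | h | h | h
    · exact hd (show a.1 ∈ ({a.1, a.2} : Finset ℕ) by simp)
        (show a.1 ∈ ({b.1, b.2} : Finset ℕ) by simp [h])
    · exact hd (show a.1 ∈ ({a.1, a.2} : Finset ℕ) by simp)
        (show a.1 ∈ ({b.1, b.2} : Finset ℕ) by simp [h])
    · exact hd (show a.2 ∈ ({a.1, a.2} : Finset ℕ) by simp)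
        (show a.2 ∈ ({b.1, b.2} : Finset ℕ) by simp [h])
    · exact hd (show a.2 ∈ ({a.1, a.2} : Finset ℕ) by simp)
        (show a.2 ∈ ({b.1, b.2} : Finset ℕ) by simp [h])
  have m1 : a.1 ∈ ({b.1, b.2} : Finset ℕ) := by rw [← hseteq]; simp
  have m2 : a.2 ∈ ({b.1, b.2} : Finset ℕ) := by rw [← hseteq]; simp
  have m3 : b.1 ∈ ({a.1, a.2} : Finset ℕ) := by rw [hseteq]; simp
  simp only [Finset.mem_insert, Finset.mem_singleton] at m1 m2 m3
  have := ha.1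
  have := hb.1
  have : a.1 = b.1 ∧ a.2 = b.2 := by omega
  exact Prod.ext this.1 this.2

/-- x cannot be simultaneously a left and a right endpoint -/
lemma not_left_and_right {mm : ℕ} {P : Finpartition (Finset.Icc 1 mm)} (hP : IsMatching P)
    {a b : ℕ × ℕ} (ha : IsArc P a) (hb : IsArc P b) : a.1 ≠ b.2 := by
  intro h
  have := arc_unique hP ha hb (Or.inr (Or.inl h))
  subst this
  have := ha.1
  omega

noncomputable def epFin {mm : ℕ} (P : Finpartition (Finset.Icc 1 mm)) : Finset ℕ :=
  endpts (arcFin P)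

noncomputable def isoFin {mm : ℕ} (P : Finpartition (Finset.Icc 1 mm)) : Finset ℕ :=
  Finset.Icc 1 mm \ epFin P

noncomputable def gapOf {mm : ℕ} (P : Finpartition (Finset.Icc 1 mm)) (x : ℕ) : ℕ :=
  ((isoFin P).filter (· < x)).card

lemma gapOf_mono {mm : ℕ} (P : Finpartition (Finset.Icc 1 mm)) {x y : ℕ} (h : x ≤ y) :
    gapOf P x ≤ gapOf P y :=
  Finset.card_le_card (Finset.monotone_filter_right _ (fun z hz => by omega))

lemma gapOf_lt_of_iso_between {mm : ℕ} (P : Finpartition (Finset.Icc 1 mm)) {x z y : ℕ}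
    (hz : z ∈ isoFin P) (h1 : x ≤ z) (h2 : z < y) : gapOf P x < gapOf P y := by
  apply Finset.card_lt_card
  have hsub : (isoFin P).filter (· < x) ⊆ (isoFin P).filter (· < y) :=
    Finset.monotone_filter_right _ (fun w hw => by omega)
  rw [Finset.ssubset_iff_of_subset hsub]
  exact ⟨z, Finset.mem_filter.2 ⟨hz, h2⟩,
    fun hcon => by rw [Finset.mem_filter] at hcon; omega⟩

/-- every position in `[1, mm]` which is not isolated is an endpoint of an arc -/
lemma endpoint_of_not_iso {mm : ℕ} {P : Finpartition (Finset.Icc 1 mm)} {z : ℕ}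
    (hz : z ∈ Finset.Icc 1 mm) (hz2 : z ∉ isoFin P) :
    ∃ c, IsArc P c ∧ (c.1 = z ∨ c.2 = z) := by
  rw [isoFin, Finset.mem_sdiff] at hz2
  push_neg at hz2
  have := hz2 hz
  rw [epFin, mem_endpts] at this
  obtain ⟨a, ha, h⟩ := this
  exact ⟨a, mem_arcFin.1 ha, h⟩

/-- same gap, no isolated point strictly between -/
lemma no_iso_between {mm : ℕ} {P : Finpartition (Finset.Icc 1 mm)} {x y z : ℕ}
    (hg : gapOf P x = gapOf P y) (h1 : x ≤ z) (h2 : z < y) : z ∉ isoFin P := by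
  intro hz
  have := gapOf_lt_of_iso_between P hz h1 h2
  omega

/-- The scan lemma: between a right endpoint and a later left endpoint in the same
gap there must be a neighbour alignment. -/
lemma scan {mm : ℕ} {P : Finpartition (Finset.Icc 1 mm)} (hP : IsMatching P)
    (hA : ¬ HasNbrAlign P) :
    ∀ d y, (∃ b, IsArc P b ∧ b.2 = y) → (∃ a, IsArc P a ∧ a.1 = y + d + 1) →
      (∀ z, y ≤ z → z < y + d + 1 → ∃ c, IsArc P c ∧ (c.1 = z ∨ c.2 = z)) → False := by
  intro d
  induction d with
  | zero =>
    rintro y ⟨b, hb, rfl⟩ ⟨a, ha, haeq⟩ _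
    exact hA ⟨b, a, hb, ha, by omega⟩
  | succ d ih =>
    rintro y ⟨b, hb, rfl⟩ ⟨a, ha, haeq⟩ hmid
    obtain ⟨c, hc, hcz⟩ := hmid (b.2 + 1) (by omega) (by omega)
    rcases hcz with hcz | hcz
    · exact hA ⟨b, c, hb, hc, by omega⟩
    · refine ih (b.2 + 1) ⟨c, hc, hcz⟩ ⟨a, ha, by omega⟩ ?_
      intro z hz1 hz2
      exact hmid z (by omega) (by omega)

/-- (W1) in one gap, left endpoints precede right endpoints -/
lemma left_lt_right {mm : ℕ} {P : Finpartition (Finset.Icc 1 mm)} (hP : IsMatching P)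
    (hA : ¬ HasNbrAlign P) {a b : ℕ × ℕ} (ha : IsArc P a) (hb : IsArc P b)
    (hg : gapOf P a.1 = gapOf P b.2) : a.1 < b.2 := by
  rcases Nat.lt_trichotomy a.1 b.2 with h | h | h
  · exact h
  · exact absurd h (not_left_and_right hP ha hb)
  · -- b.2 < a.1 : scan for an alignment
    exfalso
    refine scan hP hA (a.1 - b.2 - 1) b.2 ⟨b, hb, rfl⟩ ⟨a, ha, by omega⟩ ?_
    intro z hz1 hz2
    have hzI : z ∈ Finset.Icc 1 mm := by
      have h1 := (isArc_mem_Icc hb).2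
      have h2 := (isArc_mem_Icc ha).1
      rw [Finset.mem_Icc] at *
      omega
    refine endpoint_of_not_iso hzI (no_iso_between hg.symm hz1 (by omega))

/-- (W2) left endpoints in one gap have increasing partners -/
lemma lefts_mono {mm : ℕ} {P : Finpartition (Finset.Icc 1 mm)} (hP : IsMatching P)
    (hA : ¬ HasNbrAlign P) (hL : ¬ HasLeftNesting P) :
    ∀ d a b, IsArc P a → IsArc P b → gapOf P a.1 = gapOf P b.1 → a.1 < b.1 →
      b.1 - a.1 = d → a.2 < b.2 := by
  intro d
  induction d using Nat.strong_induction_on with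
  | _ d ih =>
    intro a b ha hb hg hlt hd
    rcases Nat.eq_or_lt_of_le (Nat.succ_le_of_lt hlt) with h | h
    · -- adjacent
      have hne : a.2 ≠ b.2 := by
        intro hEq
        have := arc_unique hP ha hb (by omega)
        subst this
        omega
      have : ¬ b.2 < a.2 := fun hcon => hL ⟨a, b, ha, hb, by omega, hcon⟩
      omega
    · -- non-adjacent: a.1 + 1 is a left endpoint of some arc c
      have hzI : a.1 + 1 ∈ Finset.Icc 1 mm := by
        have h1 := (isArc_mem_Icc ha).1
        have h2 := (isArc_mem_Icc hb).1
        rw [Finset.mem_Icc] at *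
        omega
      obtain ⟨c, hc, hcz⟩ := endpoint_of_not_iso hzI (no_iso_between hg (by omega) (by omega))
      have hgz : gapOf P a.1 = gapOf P (a.1 + 1) := by
        have h1 := gapOf_mono P (show a.1 ≤ a.1 + 1 by omega)
        have h2 := gapOf_mono P (show a.1 + 1 ≤ b.1 by omega)
        omega
      rcases hcz with hcz | hcz
      · -- c starts at a.1 + 1
        have h1 : a.2 < c.2 := by
          have hne : a.2 ≠ c.2 := by
            intro hEq
            have := arc_unique hP ha hc (by omega)
            subst this
            omega
          have : ¬ c.2 < a.2 := fun hcon => hL ⟨a, c, ha, hc, by omega, hcon⟩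
          omega
        have h2 : c.2 < b.2 := by
          rcases Nat.eq_or_lt_of_le (show c.1 ≤ b.1 by omega) with hcb | hcb
          · have := arc_unique hP hc hb (by omega)
            subst this
            omega
          · exact ih (b.1 - c.1) (by omega) c b hc hb (by rw [← hg, hgz, hcz]) hcb rfl
        omega
      · -- a.1 + 1 is a right endpoint: contradiction with W1
        exfalso
        have : b.1 < c.2 := left_lt_right hP hA hb hc (by rw [← hg, hgz, hcz])
        omega

/-- (W3) right endpoints in one gap have increasing partners -/
lemma rights_mono {mm : ℕ} {P : Finpartition (Finset.Icc 1 mm)} (hP : IsMatching P)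
    (hA : ¬ HasNbrAlign P) (hR : ¬ HasRightNesting P) :
    ∀ d a b, IsArc P a → IsArc P b → gapOf P a.2 = gapOf P b.2 → a.2 < b.2 →
      b.2 - a.2 = d → a.1 < b.1 := by
  intro d
  induction d using Nat.strong_induction_on with
  | _ d ih =>
    intro a b ha hb hg hlt hd
    rcases Nat.eq_or_lt_of_le (Nat.succ_le_of_lt hlt) with h | h
    · -- adjacent
      have hne : a.1 ≠ b.1 := by
        intro hEq
        have := arc_unique hP ha hb (by omega)
        subst this
        omega
      have : ¬ b.1 < a.1 := fun hcon => hR ⟨b, a, hb, ha, hcon, by omega⟩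
      omega
    · -- non-adjacent: b.2 - 1 is a right endpoint of some arc c
      have hzI : b.2 - 1 ∈ Finset.Icc 1 mm := by
        have h1 := (isArc_mem_Icc ha).2
        have h2 := (isArc_mem_Icc hb).2
        rw [Finset.mem_Icc] at *
        omega
      obtain ⟨c, hc, hcz⟩ := endpoint_of_not_iso hzI (no_iso_between hg (by omega) (by omega))
      have hgz : gapOf P (b.2 - 1) = gapOf P b.2 := by
        have h1 := gapOf_mono P (show b.2 - 1 ≤ b.2 by omega)
        have h2 := gapOf_mono P (show a.2 ≤ b.2 - 1 by omega)
        omega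
      rcases hcz with hcz | hcz
      · -- b.2 - 1 is a left endpoint: contradiction with W1
        exfalso
        have : c.1 < a.2 := left_lt_right hP hA hc ha (by rw [hcz, hgz, ← hg])
        omega
      · -- c ends at b.2 - 1
        have h2 : c.1 < b.1 := by
          have hne : c.1 ≠ b.1 := by
            intro hEq
            have := arc_unique hP hc hb (by omega)
            subst this
            omega
          have : ¬ b.1 < c.1 := fun hcon => hR ⟨b, c, hb, hc, hcon, by omega⟩
          omega
        have h1 : a.1 < c.1 := by
          rcases Nat.eq_or_lt_of_le (show a.2 ≤ c.2 by omega) with hca | hca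
          · have := arc_unique hP ha hc (by omega)
            subst this
            omega
          · exact ih (c.2 - a.2) (by omega) a c ha hc (by rw [hcz, hgz, ← hg]) hca rfl
        omega


/-! ### Position counting -/

lemma card_filter_or {α : Type*} (s : Finset α) (A B : α → Prop)
    [DecidablePred A] [DecidablePred B] (h : ∀ b ∈ s, ¬ (A b ∧ B b)) :
    (s.filter (fun b => A b ∨ B b)).card = (s.filter A).card + (s.filter B).card := by
  classical
  rw [Finset.filter_or, Finset.card_union_of_disjoint]
  rw [Finset.disjoint_left]
  intro x hx1 hx2
  rw [Finset.mem_filter] at hx1 hx2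
  exact h x hx1.1 ⟨hx1.2, hx2.2⟩

lemma sum_card_filter_fin {α : Type*} (A : Finset α) (f : α → ℕ) (T : ℕ) :
    ∑ h ∈ Finset.range T, (A.filter (fun x => f x = h)).card
      = (A.filter (fun x => f x < T)).card := by
  have := sum_card_filter A.val f T
  simpa [Finset.card, Finset.filter_val] using this

/-- the multiset of gap-pairs of a matching -/
noncomputable def muOf {mm : ℕ} (P : Finpartition (Finset.Icc 1 mm)) : Multiset (ℕ × ℕ) :=
  (arcFin P).val.map (fun a => (gapOf P a.1, gapOf P a.2))

lemma muOf_card_filter {mm : ℕ} (P : Finpartition (Finset.Icc 1 mm)) (pred : ℕ × ℕ → Prop)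
    [DecidablePred pred] :
    ((muOf P).filter pred).card
      = ((arcFin P).filter (fun b => pred (gapOf P b.1, gapOf P b.2))).card := by
  classical
  rw [muOf, Multiset.filter_map, Multiset.card_map]
  rw [Finset.card, Finset.filter_val]
  rfl

lemma muOf_count {mm : ℕ} (P : Finpartition (Finset.Icc 1 mm)) (e : ℕ × ℕ) :
    (muOf P).count e
      = ((arcFin P).filter (fun b => gapOf P b.1 = e.1 ∧ gapOf P b.2 = e.2)).card := by
  classical
  rw [Multiset.count_eq_card_filter_eq]
  rw [show (muOf P).filter (e = ·) = (muOf P).filter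
    (fun f => f.1 = e.1 ∧ f.2 = e.2) from Multiset.filter_congr (fun x _ => by
      constructor
      · rintro rfl; exact ⟨rfl, rfl⟩
      · rintro ⟨h1, h2⟩; exact (Prod.ext h1.symm h2.symm).symm ▸ rfl)]
  exact muOf_card_filter P _

/-- counting all positions below `x` -/
lemma pos_count {mm : ℕ} {P : Finpartition (Finset.Icc 1 mm)} (hP : IsMatching P)
    {x : ℕ} (hx : x ∈ Finset.Icc 1 mm) :
    x - 1 = gapOf P x + ((arcFin P).filter (fun b => b.1 < x)).card
      + ((arcFin P).filter (fun b => b.2 < x)).card := by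
  classical
  rw [Finset.mem_Icc] at hx
  have hIcc : (Finset.Icc 1 mm).filter (· < x) = Finset.Icc 1 (x - 1) := by
    ext z
    simp only [Finset.mem_filter, Finset.mem_Icc]
    omega
  have hcard : ((Finset.Icc 1 mm).filter (· < x)).card = x - 1 := by
    rw [hIcc, Nat.card_Icc]; omega
  have hdecomp : (Finset.Icc 1 mm).filter (· < x)
      = ((isoFin P).filter (· < x))
        ∪ (((arcFin P).filter (fun b => b.1 < x)).image (fun b : ℕ × ℕ => b.1)
        ∪ ((arcFin P).filter (fun b => b.2 < x)).image (fun b : ℕ × ℕ => b.2)) := by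
    ext z
    simp only [Finset.mem_filter, Finset.mem_union, Finset.mem_image]
    constructor
    · rintro ⟨hz1, hz2⟩
      by_cases hiso : z ∈ isoFin P
      · exact Or.inl ⟨hiso, hz2⟩
      · obtain ⟨c, hc, hcz⟩ := endpoint_of_not_iso hz1 hiso
        rcases hcz with hcz | hcz
        · exact Or.inr (Or.inl ⟨c, ⟨mem_arcFin.2 hc, by omega⟩, hcz⟩)
        · exact Or.inr (Or.inr ⟨c, ⟨mem_arcFin.2 hc, by omega⟩, hcz⟩)
    · rintro (⟨hz1, hz2⟩ | ⟨c, ⟨hc, hcl⟩, rfl⟩ | ⟨c, ⟨hc, hcl⟩, rfl⟩)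
      · rw [isoFin, Finset.mem_sdiff] at hz1
        exact ⟨hz1.1, hz2⟩
      · exact ⟨(isArc_mem_Icc (mem_arcFin.1 hc)).1, hcl⟩
      · exact ⟨(isArc_mem_Icc (mem_arcFin.1 hc)).2, hcl⟩
  have hinj1 : Set.InjOn (fun b : ℕ × ℕ => b.1) ↑((arcFin P).filter (fun b => b.1 < x)) := by
    intro u hu v hv huv
    simp only [Finset.coe_filter, Set.mem_setOf_eq] at hu hv
    exact arc_unique hP (mem_arcFin.1 hu.1) (mem_arcFin.1 hv.1) (Or.inl huv)
  have hinj2 : Set.InjOn (fun b : ℕ × ℕ => b.2) ↑((arcFin P).filter (fun b => b.2 < x)) := by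
    intro u hu v hv huv
    simp only [Finset.coe_filter, Set.mem_setOf_eq] at hu hv
    exact arc_unique hP (mem_arcFin.1 hu.1) (mem_arcFin.1 hv.1) (Or.inr (Or.inr (Or.inr huv)))
  have hd1 : Disjoint ((isoFin P).filter (· < x))
      ((((arcFin P).filter (fun b => b.1 < x)).image (fun b : ℕ × ℕ => b.1))
        ∪ (((arcFin P).filter (fun b => b.2 < x)).image (fun b : ℕ × ℕ => b.2))) := by
    rw [Finset.disjoint_left]
    intro z hz1 hz2
    rw [Finset.mem_filter, isoFin, Finset.mem_sdiff] at hz1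
    apply hz1.1.2
    rw [epFin, mem_endpts]
    rw [Finset.mem_union, Finset.mem_image, Finset.mem_image] at hz2
    rcases hz2 with ⟨c, hc, hcz⟩ | ⟨c, hc, hcz⟩ <;> rw [Finset.mem_filter] at hc
    · exact ⟨c, hc.1, Or.inl hcz⟩
    · exact ⟨c, hc.1, Or.inr hcz⟩
  have hd2 : Disjoint (((arcFin P).filter (fun b => b.1 < x)).image (fun b : ℕ × ℕ => b.1))
      (((arcFin P).filter (fun b => b.2 < x)).image (fun b : ℕ × ℕ => b.2)) := by
    rw [Finset.disjoint_left]
    intro z hz1 hz2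
    rw [Finset.mem_image] at hz1 hz2
    obtain ⟨c, hc, hcz⟩ := hz1
    obtain ⟨c', hc', hcz'⟩ := hz2
    rw [Finset.mem_filter] at hc hc'
    exact not_left_and_right hP (mem_arcFin.1 hc.1) (mem_arcFin.1 hc'.1) (by omega)
  rw [hdecomp, Finset.card_union_of_disjoint hd1, Finset.card_union_of_disjoint hd2,
    Finset.card_image_of_injOn hinj1, Finset.card_image_of_injOn hinj2] at hcard
  rw [← hcard, gapOf]; omega


lemma gapOf_strict {mm : ℕ} (P : Finpartition (Finset.Icc 1 mm)) {u v : ℕ}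
    (h : gapOf P u < gapOf P v) : u < v := by
  by_contra hcon
  push_neg at hcon
  have := gapOf_mono P hcon
  omega

/-- every arc of a good matching sits at its canonical position -/
lemma arc_position {mm : ℕ} {P : Finpartition (Finset.Icc 1 mm)} (hP : IsMatching P)
    (hA : ¬ HasNbrAlign P) (hL : ¬ HasLeftNesting P) (hR : ¬ HasRightNesting P)
    {a : ℕ × ℕ} (ha : IsArc P a) :
    a.1 = lpos (muOf P) (gapOf P a.1, gapOf P a.2)
        ((arcFin P).filter (fun b => gapOf P b.1 = gapOf P a.1 ∧ gapOf P b.2 = gapOf P a.2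
            ∧ b.2 < a.2)).card
    ∧ a.2 = rpos (muOf P) (gapOf P a.1, gapOf P a.2)
        ((arcFin P).filter (fun b => gapOf P b.1 = gapOf P a.1 ∧ gapOf P b.2 = gapOf P a.2
            ∧ b.2 < a.2)).card
    ∧ ((arcFin P).filter (fun b => gapOf P b.1 = gapOf P a.1 ∧ gapOf P b.2 = gapOf P a.2
            ∧ b.2 < a.2)).card
        < (muOf P).count (gapOf P a.1, gapOf P a.2) := by
  classical
  set p := gapOf P a.1 with hpdef
  set q := gapOf P a.2 with hqdef
  set j := ((arcFin P).filter (fun b => gapOf P b.1 = p ∧ gapOf P b.2 = q ∧ b.2 < a.2)).card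
    with hjdef
  -- key order equivalences
  have keyL : ∀ b, IsArc P b → gapOf P b.1 = p → (b.1 < a.1 ↔ b.2 < a.2) := by
    intro b hb hgb
    constructor
    · intro h
      exact lefts_mono hP hA hL (a.1 - b.1) b a hb ha (by omega) h rfl
    · intro h
      have hne : b ≠ a := by intro hEq; subst hEq; omega
      have h1 : b.1 ≠ a.1 := fun hEq => hne (arc_unique hP hb ha (by omega))
      rcases Nat.lt_or_ge b.1 a.1 with hlt | hge
      · exact hlt
      · have : a.1 < b.1 := by omega
        have := lefts_mono hP hA hL (b.1 - a.1) a b ha hb (by omega) this rfl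
        omega
  have keyR : ∀ b, IsArc P b → gapOf P b.2 = q → (b.2 < a.2 ↔ b.1 < a.1) := by
    intro b hb hgb
    constructor
    · intro h
      exact rights_mono hP hA hR (a.2 - b.2) b a hb ha (by omega) h rfl
    · intro h
      have hne : b ≠ a := by intro hEq; subst hEq; omega
      have h1 : b.2 ≠ a.2 := fun hEq => hne (arc_unique hP hb ha (by omega))
      rcases Nat.lt_or_ge b.2 a.2 with hlt | hge
      · exact hlt
      · have : a.2 < b.2 := by omega
        have := rights_mono hP hA hR (b.2 - a.2) a b ha hb (by omega) this rfl
        omega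
  have E1 : ∀ b ∈ arcFin P, (b.2 < a.1 ↔ gapOf P b.2 < p) := by
    intro b hbm
    have hb := mem_arcFin.1 hbm
    constructor
    · intro h
      have h1 : gapOf P b.2 ≤ p := gapOf_mono P (by omega)
      rcases Nat.eq_or_lt_of_le h1 with hEq | hlt
      · have := left_lt_right hP hA ha hb hEq.symm
        omega
      · exact hlt
    · intro h
      exact gapOf_strict P h
  have E2 : ∀ b ∈ arcFin P, (b.1 < a.1 ↔ (gapOf P b.1 < p ∨ (gapOf P b.1 = p ∧
      (gapOf P b.2 < q ∨ (gapOf P b.2 = q ∧ b.2 < a.2))))) := by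
    intro b hbm
    have hb := mem_arcFin.1 hbm
    constructor
    · intro h
      have h1 : gapOf P b.1 ≤ p := gapOf_mono P (by omega)
      rcases Nat.eq_or_lt_of_le h1 with hEq | hlt
      · refine Or.inr ⟨hEq, ?_⟩
        have h2 : b.2 < a.2 := (keyL b hb hEq).1 h
        have h3 : gapOf P b.2 ≤ q := gapOf_mono P (by omega)
        rcases Nat.eq_or_lt_of_le h3 with hEq2 | hlt2
        · exact Or.inr ⟨hEq2, h2⟩
        · exact Or.inl hlt2
      · exact Or.inl hlt
    · rintro (h | ⟨hEq, h⟩)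
      · exact gapOf_strict P h
      · refine (keyL b hb hEq).2 ?_
        rcases h with h | ⟨_, h⟩
        · exact gapOf_strict P h
        · exact h
  have E3 : ∀ b ∈ arcFin P, (b.1 < a.2 ↔ gapOf P b.1 < q + 1) := by
    intro b hbm
    have hb := mem_arcFin.1 hbm
    constructor
    · intro h
      have h1 : gapOf P b.1 ≤ q := gapOf_mono P (by omega)
      omega
    · intro h
      rcases Nat.eq_or_lt_of_le (show gapOf P b.1 ≤ q by omega) with hEq | hlt
      · exact left_lt_right hP hA hb ha hEq
      · exact gapOf_strict P hlt
  have E4 : ∀ b ∈ arcFin P, (b.2 < a.2 ↔ (gapOf P b.2 < q ∨ (gapOf P b.2 = q ∧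
      (gapOf P b.1 < p ∨ (gapOf P b.1 = p ∧ b.2 < a.2))))) := by
    intro b hbm
    have hb := mem_arcFin.1 hbm
    constructor
    · intro h
      have h1 : gapOf P b.2 ≤ q := gapOf_mono P (by omega)
      rcases Nat.eq_or_lt_of_le h1 with hEq | hlt
      · refine Or.inr ⟨hEq, ?_⟩
        have h2 : b.1 < a.1 := (keyR b hb hEq).1 h
        have h3 : gapOf P b.1 ≤ p := gapOf_mono P (by omega)
        rcases Nat.eq_or_lt_of_le h3 with hEq2 | hlt2
        · exact Or.inr ⟨hEq2, h⟩
        · exact Or.inl hlt2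
      · exact Or.inl hlt
    · rintro (h | ⟨hEq, h⟩)
      · exact gapOf_strict P h
      · rcases h with h | ⟨_, h⟩
        · exact (keyR b hb hEq).2 (gapOf_strict P h)
        · exact h
  -- cardinality translations
  have hlct : ∀ T : ℕ, ∑ g ∈ Finset.range T, lct (muOf P) g
      = ((arcFin P).filter (fun b => gapOf P b.1 < T)).card := by
    intro T
    rw [← sum_card_filter_fin (arcFin P) (fun b => gapOf P b.1) T]
    refine Finset.sum_congr rfl (fun g _ => ?_)
    rw [lct.eq_def, muOf_card_filter P (fun e => e.1 = g)]
  have hrct : ∀ T, ∑ g ∈ Finset.range T, rct (muOf P) g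
      = ((arcFin P).filter (fun b => gapOf P b.2 < T)).card := by
    intro T
    rw [← sum_card_filter_fin (arcFin P) (fun b => gapOf P b.2) T]
    refine Finset.sum_congr rfl (fun g _ => ?_)
    rw [rct.eq_def, muOf_card_filter P (fun e => e.2 = g)]
  have hlofs : lofs (muOf P) (p, q)
      = ((arcFin P).filter (fun b => gapOf P b.1 = p ∧ gapOf P b.2 < q)).card := by
    rw [lofs.eq_def, muOf_card_filter P (fun e => e.1 = (p, q).1 ∧ e.2 < (p, q).2)]
  have hrofs2 : ((muOf P).filter (fun f => f.2 = (p, q).2 ∧ f.1 < (p, q).1)).card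
      = ((arcFin P).filter (fun b => gapOf P b.2 = q ∧ gapOf P b.1 < p)).card := by
    rw [muOf_card_filter P (fun e => e.2 = (p, q).2 ∧ e.1 < (p, q).1)]
  -- the three position computations
  have hposL := pos_count hP (isArc_mem_Icc ha).1
  have hposR := pos_count hP (isArc_mem_Icc ha).2
  have haIcc := (isArc_mem_Icc ha).1
  have haIcc2 := (isArc_mem_Icc ha).2
  rw [Finset.mem_Icc] at haIcc haIcc2
  -- card of filter (b.2 < a.1)
  have c1 : ((arcFin P).filter (fun b => b.2 < a.1)).card
      = ∑ g ∈ Finset.range p, rct (muOf P) g := by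
    rw [hrct p]
    congr 1
    exact Finset.filter_congr (fun b hb => E1 b hb)
  -- card of filter (b.1 < a.1)
  have c2 : ((arcFin P).filter (fun b => b.1 < a.1)).card
      = (∑ g ∈ Finset.range p, lct (muOf P) g) + (lofs (muOf P) (p, q) + j) := by
    have hcongr : (arcFin P).filter (fun b => b.1 < a.1)
        = (arcFin P).filter (fun b => gapOf P b.1 < p ∨ (gapOf P b.1 = p ∧
            (gapOf P b.2 < q ∨ (gapOf P b.2 = q ∧ b.2 < a.2)))) :=
      Finset.filter_congr (fun b hb => E2 b hb)
    rw [hcongr, card_filter_or _ _ _ (fun b _ => by omega)]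
    congr 1
    · exact (hlct p).symm ▸ rfl
    · have hsplit : (arcFin P).filter (fun b => gapOf P b.1 = p ∧
          (gapOf P b.2 < q ∨ (gapOf P b.2 = q ∧ b.2 < a.2)))
          = (arcFin P).filter (fun b => (gapOf P b.1 = p ∧ gapOf P b.2 < q) ∨
              (gapOf P b.1 = p ∧ gapOf P b.2 = q ∧ b.2 < a.2)) :=
        Finset.filter_congr (fun b hb => by tauto)
      rw [hsplit, card_filter_or _ _ _ (fun b _ => by omega), hlofs]
  -- card of filter (b.1 < a.2)
  have c3 : ((arcFin P).filter (fun b => b.1 < a.2)).card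
      = (∑ g ∈ Finset.range q, lct (muOf P) g) + lct (muOf P) q := by
    rw [← Finset.sum_range_succ, hlct (q + 1)]
    congr 1
    exact Finset.filter_congr (fun b hb => E3 b hb)
  -- card of filter (b.2 < a.2)
  have c4 : ((arcFin P).filter (fun b => b.2 < a.2)).card
      = (∑ g ∈ Finset.range q, rct (muOf P) g)
        + (((arcFin P).filter (fun b => gapOf P b.2 = q ∧ gapOf P b.1 < p)).card + j) := by
    have hcongr : (arcFin P).filter (fun b => b.2 < a.2)
        = (arcFin P).filter (fun b => gapOf P b.2 < q ∨ (gapOf P b.2 = q ∧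
            (gapOf P b.1 < p ∨ (gapOf P b.1 = p ∧ b.2 < a.2)))) :=
      Finset.filter_congr (fun b hb => E4 b hb)
    rw [hcongr, card_filter_or _ _ _ (fun b _ => by omega)]
    congr 1
    · exact (hrct q).symm ▸ rfl
    · have hsplit : (arcFin P).filter (fun b => gapOf P b.2 = q ∧
          (gapOf P b.1 < p ∨ (gapOf P b.1 = p ∧ b.2 < a.2)))
          = (arcFin P).filter (fun b => (gapOf P b.2 = q ∧ gapOf P b.1 < p) ∨
              (gapOf P b.1 = p ∧ gapOf P b.2 = q ∧ b.2 < a.2)) :=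
        Finset.filter_congr (fun b hb => by tauto)
      rw [hsplit, card_filter_or _ _ _ (fun b _ => by omega)]
  -- gst expansion
  have hgstp : gst (muOf P) p = 1 + p + ((∑ g ∈ Finset.range p, lct (muOf P) g)
      + (∑ g ∈ Finset.range p, rct (muOf P) g)) := by
    rw [gst, Finset.sum_add_distrib]
  have hgstq : gst (muOf P) q = 1 + q + ((∑ g ∈ Finset.range q, lct (muOf P) g)
      + (∑ g ∈ Finset.range q, rct (muOf P) g)) := by
    rw [gst, Finset.sum_add_distrib]
  refine ⟨?_, ?_, ?_⟩
  · rw [lpos]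
    simp only []
    omega
  · rw [rpos, rofs]
    simp only []
    rw [hrofs2]
    omega
  · rw [muOf_count]
    apply Finset.card_lt_card
    rw [Finset.ssubset_iff_of_subset (Finset.monotone_filter_right _ (fun b _ hb => ⟨hb.1, hb.2.1⟩))]
    refine ⟨a, Finset.mem_filter.2 ⟨mem_arcFin.2 ha, rfl, rfl⟩, fun hcon => ?_⟩
    rw [Finset.mem_filter] at hcon
    omega


/-! ### Reconstruction -/

lemma muOf_card {mm : ℕ} (P : Finpartition (Finset.Icc 1 mm)) :
    Multiset.card (muOf P) = (arcFin P).card := by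
  rw [muOf, Multiset.card_map]
  rfl

lemma epFin_card {mm : ℕ} {P : Finpartition (Finset.Icc 1 mm)} (hP : IsMatching P) :
    (epFin P).card = 2 * (arcFin P).card := by
  rw [epFin, endpts, Finset.card_biUnion]
  · rw [Finset.sum_congr rfl (fun a ha => Finset.card_pair
      (show a.1 ≠ a.2 by have := (mem_arcFin.1 ha).1; omega))]
    rw [Finset.sum_const, smul_eq_mul]
    ring
  · intro a ha b hb hne
    rw [Function.onFun, Finset.disjoint_left]
    intro x hx1 hx2
    simp only [Finset.mem_insert, Finset.mem_singleton] at hx1 hx2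
    have := arc_unique hP (mem_arcFin.1 ha) (mem_arcFin.1 hb) (by omega)
    exact hne this

lemma epFin_subset {mm : ℕ} (P : Finpartition (Finset.Icc 1 mm)) :
    epFin P ⊆ Finset.Icc 1 mm := by
  intro x hx
  obtain ⟨a, ha, h⟩ := mem_endpts.1 hx
  have := isArc_mem_Icc (mem_arcFin.1 ha)
  rcases h with rfl | rfl
  exacts [this.1, this.2]

lemma isoFin_card {mm : ℕ} {P : Finpartition (Finset.Icc 1 mm)} (hP : IsMatching P) :
    (isoFin P).card = mm - 2 * (arcFin P).card := by
  rw [isoFin, Finset.card_sdiff_of_subset (epFin_subset P), epFin_card hP, Nat.card_Icc]; omega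

lemma gapOf_le_iso_card {mm : ℕ} (P : Finpartition (Finset.Icc 1 mm)) (x : ℕ) :
    gapOf P x ≤ (isoFin P).card :=
  Finset.card_le_card (Finset.filter_subset _ _)

lemma good_muOf {mm t : ℕ} {P : Finpartition (Finset.Icc 1 mm)} (hP : IsMatching P)
    (hiso : (isoFin P).card = t - 1) (ht : 1 ≤ t) : Good t (muOf P) := by
  intro e he
  rw [muOf, Multiset.mem_map] at he
  obtain ⟨a, ha, rfl⟩ := he
  have hlt := (mem_arcFin.1 (Multiset.mem_toFinset.1 (by rwa [Multiset.mem_toFinset]))).1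
  constructor
  · exact gapOf_mono P (by omega)
  · have := gapOf_le_iso_card P a.2
    omega

/-- two matchings with the same arcs are equal -/
lemma matching_ext {mm : ℕ} {P Q : Finpartition (Finset.Icc 1 mm)}
    (hP : IsMatching P) (hQ : IsMatching Q) (h : ∀ a, IsArc P a ↔ IsArc Q a) : P = Q := by
  have key : ∀ (P' Q' : Finpartition (Finset.Icc 1 mm)), IsMatching P' → IsMatching Q' →
      (∀ a, IsArc P' a ↔ IsArc Q' a) → P'.parts ⊆ Q'.parts := by
    intro P' Q' hP' hQ' h' B hB
    have hcard : B.card ≤ 2 := hP' B hB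
    have hne : B.Nonempty := Finset.nonempty_iff_ne_empty.2 (by
      intro hcon
      exact P'.bot_notMem (by rw [Finset.bot_eq_empty, ← hcon]; exact hB))
    interval_cases hc : B.card
    · exact absurd (Finset.card_eq_zero.1 hc) (Finset.nonempty_iff_ne_empty.1 hne)
    · obtain ⟨x, rfl⟩ := Finset.card_eq_one.1 hc
      have hxg : x ∈ Finset.Icc 1 mm := P'.le hB (Finset.mem_singleton_self x)
      obtain ⟨B', hB', hxB'⟩ := Q'.exists_mem hxg
      have hcard' : B'.card ≤ 2 := hQ' B' hB'
      have hne' : B'.Nonempty := ⟨x, hxB'⟩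
      interval_cases hc' : B'.card
      · exact absurd (Finset.card_eq_zero.1 hc') (Finset.nonempty_iff_ne_empty.1 hne')
      · obtain ⟨y, rfl⟩ := Finset.card_eq_one.1 hc'
        rw [Finset.mem_singleton] at hxB'
        subst hxB'
        exact hB'
      · exfalso
        obtain ⟨u, v, huv, rfl⟩ := Finset.card_eq_two.1 hc'
        set c : ℕ × ℕ := if u < v then (u, v) else (v, u) with hcdef
        have hcarc : IsArc Q' c := by
          rcases Nat.lt_or_ge u v with hlt | hge
          · simpa [hcdef, hlt] using isArc_of_block hlt hB'
          · have hlt : v < u := by omega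
            have : ({v, u} : Finset ℕ) = {u, v} := Finset.pair_comm v u
            simp only [hcdef, if_neg (by omega : ¬ u < v)]
            exact isArc_of_block hlt (this ▸ hB')
        have hParc : IsArc P' c := (h' c).2 hcarc
        have hblk := block_of_arc hP' hParc
        have hxc : x ∈ ({c.1, c.2} : Finset ℕ) := by
          rcases Nat.lt_or_ge u v with hlt | hge <;>
            simp only [hcdef, if_pos, if_neg, Finset.mem_insert, Finset.mem_singleton] <;>
          · rw [Finset.mem_insert, Finset.mem_singleton] at hxB'
            split <;> simp <;> omega
        have hdisj := P'.disjoint hB hblk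
        by_cases hEq : ({x} : Finset ℕ) = {c.1, c.2}
        · have : ({c.1, c.2} : Finset ℕ).card = 2 := Finset.card_pair (by
            have := hParc.1; omega)
          rw [← hEq] at this
          simp at this
        · have := hdisj hEq
          rw [Function.onFun, Finset.disjoint_left] at this
          simp only [id_eq] at this
          exact this (Finset.mem_singleton_self x) hxc
    · obtain ⟨u, v, huv, rfl⟩ := Finset.card_eq_two.1 hc
      set c : ℕ × ℕ := if u < v then (u, v) else (v, u) with hcdef
      have hpair : ({u, v} : Finset ℕ) = {c.1, c.2} := by
        rcases Nat.lt_or_ge u v with hlt | hge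
        · simp [hcdef, hlt]
        · have : ({v, u} : Finset ℕ) = {u, v} := Finset.pair_comm v u
          simp only [hcdef, if_neg (by omega : ¬ u < v)]
          exact this.symm
      have hParc : IsArc P' c := by
        rcases Nat.lt_or_ge u v with hlt | hge
        · simpa [hcdef, hlt] using isArc_of_block hlt hB
        · have hlt : v < u := by omega
          have : ({v, u} : Finset ℕ) = {u, v} := Finset.pair_comm v u
          simp only [hcdef, if_neg (by omega : ¬ u < v)]
          exact isArc_of_block hlt (this ▸ hB)
      have hQarc : IsArc Q' c := (h' c).1 hParc
      have := block_of_arc hQ' hQarc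
      rwa [hpair]
  apply Finpartition.ext
  apply Finset.Subset.antisymm
  · exact key P Q hP hQ h
  · exact key Q P hQ hP (fun a => (h a).symm)


/-! ### The constructed matching -/

def Phi (t mm : ℕ) (μ : Multiset (ℕ × ℕ)) (hg : Good t μ) (ht : 1 ≤ t)
    (hmm : mm + 1 = t + 2 * Multiset.card μ) : Finpartition (Finset.Icc 1 mm) :=
  mkP mm (arcsOf μ)
    (fun a ha => by
      have h1 := arcsOf_lt hg ha
      have h2 := arcsOf_bounds hg ht ha
      exact ⟨h1, h2.1, by omega⟩)
    (fun a ha b hb hne => arcsOf_disj hg ha hb hne)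

lemma isArc_Phi {t mm : ℕ} {μ : Multiset (ℕ × ℕ)} {hg : Good t μ} {ht : 1 ≤ t}
    {hmm : mm + 1 = t + 2 * Multiset.card μ} {a : ℕ × ℕ} :
    IsArc (Phi t mm μ hg ht hmm) a ↔ a ∈ arcsOf μ := isArc_mkP

lemma arcFin_Phi {t mm : ℕ} {μ : Multiset (ℕ × ℕ)} {hg : Good t μ} {ht : 1 ≤ t}
    {hmm : mm + 1 = t + 2 * Multiset.card μ} :
    arcFin (Phi t mm μ hg ht hmm) = arcsOf μ := by
  ext a
  rw [mem_arcFin, isArc_Phi]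

lemma isMatching_Phi {t mm : ℕ} {μ : Multiset (ℕ × ℕ)} {hg : Good t μ} {ht : 1 ≤ t}
    {hmm : mm + 1 = t + 2 * Multiset.card μ} : IsMatching (Phi t mm μ hg ht hmm) :=
  isMatching_mkP

lemma endpts_arcsOf_card {t : ℕ} {μ : Multiset (ℕ × ℕ)} (hg : Good t μ) :
    (endpts (arcsOf μ)).card = 2 * Multiset.card μ := by
  rw [endpts, Finset.card_biUnion]
  · rw [Finset.sum_congr rfl (fun a ha => Finset.card_pair
      (show a.1 ≠ a.2 by have := arcsOf_lt hg ha; omega))]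
    rw [Finset.sum_const, smul_eq_mul, card_arcsOf hg]
    ring
  · intro a ha b hb hne
    rw [Function.onFun, Finset.disjoint_left]
    intro x hx1 hx2
    simp only [Finset.mem_insert, Finset.mem_singleton] at hx1 hx2
    have := arcsOf_disj hg ha hb hne
    omega

/-- the isolated points of the constructed matching are exactly the gap separators -/
lemma iso_arcsOf {t mm : ℕ} {μ : Multiset (ℕ × ℕ)} (hg : Good t μ) (ht : 1 ≤ t)
    (hmm : mm + 1 = t + 2 * Multiset.card μ) :
    Finset.Icc 1 mm \ endpts (arcsOf μ)
      = (Finset.range (t - 1)).image (fun g => gst μ g + (lct μ g + rct μ g)) := by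
  have htot := gst_total hg
  have hmono : ∀ g g' : ℕ, g ≤ g' →
      gst μ g + (lct μ g + rct μ g) ≤ gst μ g' + (lct μ g' + rct μ g') := by
    intro g g' hgg
    rcases Nat.eq_or_lt_of_le hgg with rfl | hlt
    · omega
    · have := gst_mono μ hlt; omega
  have himg : (Finset.range (t - 1)).image (fun g => gst μ g + (lct μ g + rct μ g))
      ⊆ Finset.Icc 1 mm \ endpts (arcsOf μ) := by
    intro x hx
    obtain ⟨g, hg1, rfl⟩ := Finset.mem_image.1 hx
    rw [Finset.mem_range] at hg1
    have hb1 : 1 ≤ gst μ g := by rw [gst]; omega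
    have hb2 : gst μ g + (lct μ g + rct μ g) ≤ mm := by
      have h1 := gst_succ μ g
      have h2 : gst μ (g + 1) ≤ gst μ (t - 1) := gst_le (by omega)
      have h3 := gst_mono μ (show t - 1 < t by omega)
      omega
    rw [Finset.mem_sdiff, Finset.mem_Icc]
    refine ⟨⟨by omega, hb2⟩, ?_⟩
    intro hcon
    obtain ⟨a, ha, hcoord⟩ := mem_endpts.1 hcon
    obtain ⟨e, he, jj, hjj, rfl⟩ := mem_arcsOf.1 ha
    have hzl := lzone (μ := μ) hjj
    have hzr := rzone (μ := μ) hjj (hg e he).1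
    rcases hcoord with hcoord | hcoord
    · simp only at hcoord
      rcases lt_trichotomy g e.1 with hgt | hgt | hgt
      · have := gst_mono μ hgt; omega
      · subst hgt; omega
      · have := gst_mono μ hgt; omega
    · simp only at hcoord
      rcases lt_trichotomy g e.2 with hgt | hgt | hgt
      · have := gst_mono μ hgt; omega
      · subst hgt; omega
      · have := gst_mono μ hgt; omega
  have hinj : Set.InjOn (fun g => gst μ g + (lct μ g + rct μ g)) ↑(Finset.range (t - 1)) := by
    intro g hg1 g' hg1' hEq
    simp only at hEq
    rcases lt_trichotomy g g' with hgt | hgt | hgt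
    · have := gst_mono μ hgt; omega
    · exact hgt
    · have := gst_mono μ hgt; omega
  have hcard1 : ((Finset.range (t - 1)).image
      (fun g => gst μ g + (lct μ g + rct μ g))).card = t - 1 := by
    rw [Finset.card_image_of_injOn hinj, Finset.card_range]
  have hcard2 : (Finset.Icc 1 mm \ endpts (arcsOf μ)).card = t - 1 := by
    rw [Finset.card_sdiff_of_subset, endpts_arcsOf_card hg, Nat.card_Icc]
    · omega
    · intro x hx
      obtain ⟨a, ha, h⟩ := mem_endpts.1 hx
      have h1 := arcsOf_lt hg ha
      have h2 := arcsOf_bounds hg ht ha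
      rw [Finset.mem_Icc]
      omega
  exact (Finset.eq_of_subset_of_card_le himg (by omega)).symm

lemma gapOf_Phi_lpos {t mm : ℕ} {μ : Multiset (ℕ × ℕ)} {hg : Good t μ} {ht : 1 ≤ t}
    {hmm : mm + 1 = t + 2 * Multiset.card μ} {e : ℕ × ℕ} (he : e ∈ μ) {j : ℕ}
    (hj : j < μ.count e) :
    gapOf (Phi t mm μ hg ht hmm) (lpos μ e j) = e.1
    ∧ gapOf (Phi t mm μ hg ht hmm) (rpos μ e j) = e.2 := by
  classical
  have hiso : isoFin (Phi t mm μ hg ht hmm)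
      = (Finset.range (t - 1)).image (fun g => gst μ g + (lct μ g + rct μ g)) := by
    rw [isoFin, epFin, arcFin_Phi]
    exact iso_arcsOf hg ht hmm
  have hinj : ∀ s : Finset ℕ, s ⊆ Finset.range (t - 1) → Set.InjOn
      (fun g => gst μ g + (lct μ g + rct μ g)) ↑s := by
    intro s hs g hg1 g' hg1' hEq
    simp only at hEq
    rcases lt_trichotomy g g' with hgt | hgt | hgt
    · have := gst_mono μ hgt; omega
    · exact hgt
    · have := gst_mono μ hgt; omega
  have key : ∀ x pp, pp < t → (∀ g, g < pp → gst μ g + (lct μ g + rct μ g) < x) →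
      (∀ g, pp ≤ g → x ≤ gst μ g + (lct μ g + rct μ g)) →
      gapOf (Phi t mm μ hg ht hmm) x = pp := by
    intro x pp hppt hlo hhi
    rw [gapOf, hiso, Finset.filter_image, Finset.card_image_of_injOn
      (hinj _ (Finset.filter_subset _ _))]
    have : (Finset.range (t - 1)).filter (fun g => gst μ g + (lct μ g + rct μ g) < x)
        = Finset.range pp := by
      ext g
      simp only [Finset.mem_filter, Finset.mem_range]
      constructor
      · rintro ⟨h1, h2⟩
        by_contra hcon
        have := hhi g (by omega)
        omega
      · intro h1
        refine ⟨by omega, hlo g h1⟩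
    rw [this, Finset.card_range]
  have hzl := lzone (μ := μ) hj
  have hzr := rzone (μ := μ) hj (hg e he).1
  have he2t := (hg e he).2
  have he12 := (hg e he).1
  constructor
  · refine key _ e.1 (by omega) ?_ ?_
    · intro g hgl
      have := gst_mono μ hgl
      omega
    · intro g hgl
      rcases Nat.eq_or_lt_of_le hgl with rfl | hlt
      · omega
      · have := gst_mono μ hlt
        omega
  · refine key _ e.2 (by omega) ?_ ?_
    · intro g hgl
      have := gst_mono μ hgl
      omega
    · intro g hgl
      rcases Nat.eq_or_lt_of_le hgl with rfl | hlt
      · omega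
      · have := gst_mono μ hlt
        omega

lemma muOf_Phi {t mm : ℕ} {μ : Multiset (ℕ × ℕ)} (hg : Good t μ) (ht : 1 ≤ t)
    (hmm : mm + 1 = t + 2 * Multiset.card μ) :
    muOf (Phi t mm μ hg ht hmm) = μ := by
  classical
  rw [Multiset.ext]
  intro e₀
  rw [muOf_count, arcFin_Phi]
  have hset : (arcsOf μ).filter
      (fun b => gapOf (Phi t mm μ hg ht hmm) b.1 = e₀.1
        ∧ gapOf (Phi t mm μ hg ht hmm) b.2 = e₀.2)
      = (Finset.range (μ.count e₀)).image (fun j => (lpos μ e₀ j, rpos μ e₀ j)) := by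
    ext a
    simp only [Finset.mem_filter, Finset.mem_image, Finset.mem_range]
    constructor
    · rintro ⟨ha, hg1, hg2⟩
      obtain ⟨e, he, j, hj, rfl⟩ := mem_arcsOf.1 ha
      obtain ⟨k1, k2⟩ := gapOf_Phi_lpos (hg := hg) (ht := ht) (hmm := hmm) he hj
      simp only at hg1 hg2
      have he0 : e = e₀ := by
        rw [k1] at hg1
        rw [k2] at hg2
        exact Prod.ext hg1 hg2
      subst he0
      exact ⟨j, hj, rfl⟩
    · rintro ⟨j, hj, rfl⟩
      have he0 : e₀ ∈ μ := Multiset.count_pos.1 (by omega)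
      refine ⟨mem_arcsOf.2 ⟨e₀, he0, j, hj, rfl⟩, ?_⟩
      obtain ⟨k1, k2⟩ := gapOf_Phi_lpos (hg := hg) (ht := ht) (hmm := hmm) he0 hj
      exact ⟨k1, k2⟩
  rw [hset, Finset.card_image_of_injOn, Finset.card_range]
  intro j hj j' hj' hjj
  simp only [Finset.mem_coe, Finset.mem_range] at hj hj'
  have := congrArg Prod.fst hjj
  simp only [lpos] at this
  omega


/-! ### Properties of `Phi` and reconstruction -/

lemma numArcs_Phi {t mm : ℕ} {μ : Multiset (ℕ × ℕ)} (hg : Good t μ) {ht : 1 ≤ t}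
    {hmm : mm + 1 = t + 2 * Multiset.card μ} :
    numArcs (Phi t mm μ hg ht hmm) = Multiset.card μ := by
  rw [Phi]; exact numArcs_mkP.trans (card_arcsOf hg)

lemma noAlign_Phi {t mm : ℕ} {μ : Multiset (ℕ × ℕ)} (hg : Good t μ) {ht : 1 ≤ t}
    {hmm : mm + 1 = t + 2 * Multiset.card μ} : ¬ HasNbrAlign (Phi t mm μ hg ht hmm) := by
  rintro ⟨a, b, ha, hb, h⟩
  rw [isArc_Phi] at ha hb
  exact arcsOf_noAlign hg ha hb h

lemma noLeft_Phi {t mm : ℕ} {μ : Multiset (ℕ × ℕ)} (hg : Good t μ) {ht : 1 ≤ t}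
    {hmm : mm + 1 = t + 2 * Multiset.card μ} : ¬ HasLeftNesting (Phi t mm μ hg ht hmm) := by
  rintro ⟨a, b, ha, hb, h1, h2⟩
  rw [isArc_Phi] at ha hb
  exact arcsOf_noLeftNest hg ha hb ⟨h1, h2⟩

lemma noRight_Phi {t mm : ℕ} {μ : Multiset (ℕ × ℕ)} (hg : Good t μ) {ht : 1 ≤ t}
    {hmm : mm + 1 = t + 2 * Multiset.card μ} : ¬ HasRightNesting (Phi t mm μ hg ht hmm) := by
  rintro ⟨a, b, ha, hb, h1, h2⟩
  rw [isArc_Phi] at ha hb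
  exact arcsOf_noRightNest hg ha hb ⟨h1, h2⟩

lemma good_muOf' {mm t : ℕ} {P : Finpartition (Finset.Icc 1 mm)} (hP : IsMatching P)
    (ht : 1 ≤ t) (hmm : mm + 1 = t + 2 * Multiset.card (muOf P)) : Good t (muOf P) := by
  apply good_muOf hP _ ht
  rw [isoFin_card hP]
  have := muOf_card P
  omega

lemma arcFin_eq_arcsOf {mm t : ℕ} {P : Finpartition (Finset.Icc 1 mm)} (hP : IsMatching P)
    (hA : ¬ HasNbrAlign P) (hL : ¬ HasLeftNesting P) (hR : ¬ HasRightNesting P)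
    (ht : 1 ≤ t) (hmm : mm + 1 = t + 2 * Multiset.card (muOf P)) :
    arcFin P = arcsOf (muOf P) := by
  have hg : Good t (muOf P) := good_muOf' hP ht hmm
  have hsub : arcFin P ⊆ arcsOf (muOf P) := by
    intro a ha
    have harc := mem_arcFin.1 ha
    obtain ⟨h1, h2, h3⟩ := arc_position hP hA hL hR harc
    refine mem_arcsOf.2 ⟨(gapOf P a.1, gapOf P a.2), ?_, _, h3, Prod.ext h1 h2⟩
    rw [muOf, Multiset.mem_map]
    exact ⟨a, ha, rfl⟩
  refine Finset.eq_of_subset_of_card_le hsub ?_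
  rw [card_arcsOf hg, muOf_card]

lemma recon {mm t : ℕ} {P : Finpartition (Finset.Icc 1 mm)} (hP : IsMatching P)
    (hA : ¬ HasNbrAlign P) (hL : ¬ HasLeftNesting P) (hR : ¬ HasRightNesting P)
    (ht : 1 ≤ t) (hmm : mm + 1 = t + 2 * Multiset.card (muOf P)) :
    Phi t mm (muOf P) (good_muOf' hP ht hmm) ht hmm = P := by
  apply matching_ext isMatching_Phi hP
  intro a
  rw [isArc_Phi, ← arcFin_eq_arcsOf hP hA hL hR ht hmm, mem_arcFin]

/-! ### Counting -/

def symToMu {t k : ℕ} (σ : Sym {e : Fin t × Fin t // e.1 ≤ e.2} k) : Multiset (ℕ × ℕ) :=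
  σ.1.map (fun e => ((e.1.1 : ℕ), (e.1.2 : ℕ)))

lemma symToMu_card {t k : ℕ} (σ : Sym {e : Fin t × Fin t // e.1 ≤ e.2} k) :
    Multiset.card (symToMu σ) = k := by
  rw [symToMu, Multiset.card_map, σ.2]

lemma symToMu_good {t k : ℕ} (σ : Sym {e : Fin t × Fin t // e.1 ≤ e.2} k) :
    Good t (symToMu σ) := by
  rintro e he
  rw [symToMu, Multiset.mem_map] at he
  obtain ⟨f, hf, rfl⟩ := he
  exact ⟨f.2, f.1.2.isLt⟩

lemma symToMu_inj {t k : ℕ} : Function.Injective (symToMu (t := t) (k := k)) := by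
  intro σ σ' h
  rw [symToMu, symToMu] at h
  apply Subtype.ext
  refine Multiset.map_injective (f := fun e : {e : Fin t × Fin t // e.1 ≤ e.2} =>
    ((e.1.1 : ℕ), (e.1.2 : ℕ))) ?_ h
  intro x y hxy
  simp only [Prod.mk.injEq] at hxy
  exact Subtype.ext (Prod.ext (Fin.ext hxy.1) (Fin.ext hxy.2))

/-- the cardinality of the pair type -/
lemma card_E (t : ℕ) :
    Fintype.card {e : Fin t × Fin t // e.1 ≤ e.2} = t * (t + 1) / 2 := by
  have hEq : Fintype.card {e : Fin t × Fin t // e.1 ≤ e.2}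
      = Fintype.card ((b : Fin t) × Fin (b.1 + 1)) := by
    apply Fintype.card_congr
    refine ⟨fun e => ⟨e.1.2, ⟨e.1.1.1, by have := e.2; have := e.1.2.isLt; omega⟩⟩,
      fun x => ⟨(⟨x.2.1, by have := x.2.isLt; have := x.1.isLt; omega⟩, x.1), by
        have := x.2.isLt
        show (x.2.1 : ℕ) ≤ (x.1 : ℕ)
        omega⟩, ?_, ?_⟩
    · rintro ⟨⟨a, b⟩, h⟩
      exact Subtype.ext (Prod.ext (Fin.ext rfl) rfl)
    · rintro ⟨b, j⟩
      exact congrArg (Sigma.mk b) (Fin.ext rfl)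
  rw [hEq, Fintype.card_sigma]
  simp only [Fintype.card_fin]
  rw [Fin.sum_univ_eq_sum_range (fun i => i + 1) t]
  have h1 : ∑ i ∈ Finset.range (t + 1), i = (∑ i ∈ Finset.range t, (i + 1)) + 0 :=
    Finset.sum_range_succ' (fun i => i) t
  have h2 : (∑ i ∈ Finset.range (t + 1), i) * 2 = t * (t + 1) := by
    rw [Finset.sum_range_id_mul_two, Nat.add_sub_cancel, Nat.mul_comm]
  omega

/-- The main counting lemma. -/
lemma Rcount (t k mm : ℕ) (ht : 1 ≤ t) (hmm : mm + 1 = t + 2 * k) :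
    {P : Finpartition (Finset.Icc 1 mm) | IsMatching P ∧ numArcs P = k ∧ ¬ HasNbrAlign P ∧
      ¬ HasLeftNesting P ∧ ¬ HasRightNesting P}.ncard
    = (t * (t + 1) / 2 + k - 1).choose k := by
  classical
  set S : Set (Finpartition (Finset.Icc 1 mm)) :=
    {P | IsMatching P ∧ numArcs P = k ∧ ¬ HasNbrAlign P ∧
      ¬ HasLeftNesting P ∧ ¬ HasRightNesting P} with hSdef
  set E := {e : Fin t × Fin t // e.1 ≤ e.2} with hEdef
  have hmm' : ∀ σ : Sym E k, mm + 1 = t + 2 * Multiset.card (symToMu σ) := by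
    intro σ
    rw [symToMu_card]
    exact hmm
  set F : Sym E k → {P : Finpartition (Finset.Icc 1 mm) // P ∈ S} := fun σ =>
    ⟨Phi t mm (symToMu σ) (symToMu_good σ) ht (hmm' σ),
      ⟨isMatching_Phi, by rw [numArcs_Phi, symToMu_card],
        noAlign_Phi _, noLeft_Phi _, noRight_Phi _⟩⟩ with hFdef
  have hPhiCongr : ∀ (μ1 μ2 : Multiset (ℕ × ℕ)) (h : μ1 = μ2) g1 g2 hm1 hm2,
      Phi t mm μ1 g1 ht hm1 = Phi t mm μ2 g2 ht hm2 := by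
    rintro μ1 μ2 rfl g1 g2 hm1 hm2
    rfl
  have hbij : Function.Bijective F := by
    constructor
    · intro σ σ' h
      have h2 : Phi t mm (symToMu σ) (symToMu_good σ) ht (hmm' σ)
          = Phi t mm (symToMu σ') (symToMu_good σ') ht (hmm' σ') :=
        congrArg Subtype.val h
      have h3 : symToMu σ = symToMu σ' := by
        have := congrArg muOf h2
        rwa [muOf_Phi, muOf_Phi] at this
      exact symToMu_inj h3
    · rintro ⟨P, hP, hk, hA, hL, hR⟩
      have hmmP : mm + 1 = t + 2 * Multiset.card (muOf P) := by
        rw [muOf_card, ← numArcs_eq_card_arcFin, hk]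
        exact hmm
      have hg := good_muOf' hP ht hmmP
      -- lift muOf P to a Sym
      have hex : ∃ σ : Sym E k, symToMu σ = muOf P := by
        refine ⟨⟨(muOf P).attach.map (fun x =>
          (⟨(⟨x.1.1, by have := hg x.1 x.2; omega⟩, ⟨x.1.2, (hg x.1 x.2).2⟩), by
            show (x.1.1 : ℕ) ≤ x.1.2
            exact (hg x.1 x.2).1⟩ : E)), by
          rw [Multiset.card_map, Multiset.card_attach, muOf_card,
            ← numArcs_eq_card_arcFin, hk]⟩, ?_⟩
        show Multiset.map _ (Multiset.map _ _) = _; rw [Multiset.map_map]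
        exact (Multiset.map_congr rfl (fun x _ => rfl)).trans (Multiset.attach_map_val _)
      obtain ⟨σ, hσ⟩ := hex
      refine ⟨σ, Subtype.ext ?_⟩
      show Phi t mm (symToMu σ) (symToMu_good σ) ht (hmm' σ) = P
      rw [hPhiCongr (symToMu σ) (muOf P) hσ (symToMu_good σ) hg (hmm' σ) hmmP]
      exact recon hP hA hL hR ht hmmP
  rw [← Nat.card_coe_set_eq]
  rw [Nat.card_congr (Equiv.ofBijective F hbij).symm]
  rw [Nat.card_eq_fintype_card, Sym.card_sym_eq_choose, card_E]

end Stmt9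

/-- `R(n+k-1, k) = C( C(n-k+1, 2) + k - 1, k )`. -/
theorem stmt_9 (n k : ℕ) (hn : 1 ≤ n) (hk : k ≤ n - 1) :
    Rnum (n + k - 1) k =
      Nat.choose ((n - k) * (n - k + 1) / 2 + k - 1) k := by
  have ht : 1 ≤ n - k := by omega
  have hmm : (n + k - 1) + 1 = (n - k) + 2 * k := by omega
  rw [Rnum]
  exact Stmt9.Rcount (n - k) k (n + k - 1) ht hmm
end

section
/- For all integers n ≥ 1 and 0 ≤ k ≤ n-1, the number of set partitions of [n] with exactly k arcs and no right nestings equals the binomial coefficient C( (n-k)(n-k+1)/2 + k - 1, k ), i.e. T(n,k) = C( C(n-k+1, 2) + k - 1, k ). -/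
open Finset

section AuxProof


lemma mc_vand (a b : ℕ) : ∀ k, ∑ t ∈ Finset.range (k+1),
    Nat.multichoose a t * Nat.multichoose b (k-t) = Nat.multichoose (a+b) k := by
  induction a with
  | zero =>
    intro k
    rw [Finset.sum_eq_single 0]
    · simp [Nat.multichoose]
    · intro t _ ht
      obtain ⟨s, rfl⟩ := Nat.exists_eq_succ_of_ne_zero ht
      simp [Nat.multichoose_eq]
    · simp
  | succ a ih =>
    intro k
    induction k with
    | zero => simp [Nat.multichoose]
    | succ k ihk =>
      have key : ∀ (c : ℕ), ∑ t ∈ Finset.range (k+1+1),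
          Nat.multichoose c t * Nat.multichoose b (k+1-t)
          = (∑ i ∈ Finset.range (k+1), Nat.multichoose c (i+1) * Nat.multichoose b (k-i))
            + Nat.multichoose b (k+1) := by
        intro c
        rw [Finset.sum_range_succ']
        simp only [Nat.multichoose, Nat.choose_zero_right, Nat.zero_add, one_mul, Nat.sub_zero]
        congr 1
        apply Finset.sum_congr rfl
        intro i _
        rw [Nat.succ_sub_succ]
      rw [key]
      have h1 : ∀ i ∈ Finset.range (k+1),
          Nat.multichoose (a+1) (i+1) * Nat.multichoose b (k-i) =
          Nat.multichoose a (i+1) * Nat.multichoose b (k-i)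
          + Nat.multichoose (a+1) i * Nat.multichoose b (k-i) := by
        intro i _
        rw [Nat.multichoose_succ_succ, Nat.add_mul]
      rw [Finset.sum_congr rfl h1, Finset.sum_add_distrib]
      have h2 : ∑ i ∈ Finset.range (k+1), Nat.multichoose (a+1) i * Nat.multichoose b (k-i)
          = Nat.multichoose (a+1+b) k := ihk
      have h3 : (∑ i ∈ Finset.range (k+1), Nat.multichoose a (i+1) * Nat.multichoose b (k-i))
          + Nat.multichoose b (k+1) = Nat.multichoose (a+b) (k+1) := by
        rw [← key a]; exact ih (k+1)
      have h4 : a+1+b = (a+b)+1 := by ring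
      rw [h2, h4]
      rw [Nat.multichoose_succ_succ]
      omega


def Hset (m t : ℕ) : Finset (Finset ℕ) :=
  (Finset.Icc 1 (m + t - 1)).powerset.filter
    (fun W => W.card = t ∧ ∀ w ∈ W, w < m + (W.filter (· ≤ w)).card)

lemma add_card_le_max' {S : Finset ℕ} {w : ℕ} (h : ∀ x ∈ S, w < x) (hne : S.Nonempty) :
    w + S.card ≤ S.max' hne := by
  have hsub : S ⊆ Finset.Icc (w+1) (S.max' hne) := by
    intro x hx
    exact Finset.mem_Icc.2 ⟨h x hx, Finset.le_max' S x hx⟩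
  have := Finset.card_le_card hsub
  rw [Nat.card_Icc] at this
  have hw : w < S.max' hne := h _ (S.max'_mem hne)
  omega

lemma filter_le_erase (W : Finset ℕ) {M w : ℕ} (h : w < M) :
    (W.erase M).filter (· ≤ w) = W.filter (· ≤ w) := by
  rw [Finset.filter_erase, Finset.erase_eq_of_notMem]
  simp only [Finset.mem_filter, not_and, not_le]
  intro _; exact h

lemma filter_le_insert (W : Finset ℕ) {M w : ℕ} (h : w < M) :
    (insert M W).filter (· ≤ w) = W.filter (· ≤ w) := by
  rw [Finset.filter_insert, if_neg (by omega)]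

lemma Hset_zero_right (m : ℕ) : Hset m 0 = {∅} := by
  ext W
  simp only [Hset, Finset.mem_filter, Finset.mem_powerset, Finset.mem_singleton]
  constructor
  · rintro ⟨-, h, -⟩; exact Finset.card_eq_zero.1 h
  · rintro rfl; simp

lemma Hset_zero_left (t : ℕ) : Hset 0 (t+1) = ∅ := by
  ext W
  simp only [Hset, Finset.mem_filter, Finset.mem_powerset, Finset.notMem_empty, iff_false]
  rintro ⟨hsub, hcard, hcond⟩
  have hne : W.Nonempty := Finset.card_pos.1 (by omega)
  have hwW : W.min' hne ∈ W := W.min'_mem hne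
  have h1 : (W.filter (· ≤ W.min' hne)).card = 1 := by
    have : W.filter (· ≤ W.min' hne) = {W.min' hne} := by
      ext x
      simp only [Finset.mem_filter, Finset.mem_singleton]
      constructor
      · rintro ⟨hx, hle⟩
        exact le_antisymm hle (W.min'_le x hx)
      · rintro rfl; exact ⟨hwW, le_refl _⟩
    rw [this]; rfl
  have h2 := hcond _ hwW
  rw [h1] at h2
  have h3 := hsub hwW
  rw [Finset.mem_Icc] at h3
  omega

lemma Hset_rec (m t : ℕ) :
    (Hset (m+1) (t+1)).card = (Hset (m+1) t).card + (Hset m (t+1)).card := by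
  classical
  set M := m + t + 1 with hM
  have hamb : m + 1 + (t + 1) - 1 = M := by omega
  rw [← Finset.card_filter_add_card_filter_not (s := Hset (m+1) (t+1))
      (p := fun W => M ∈ W)]
  congr 1
  · -- with M : bijection with Hset (m+1) t  via erase
    refine Finset.card_bij' (fun W _ => W.erase M) (fun W _ => insert M W) ?hi ?hj ?hli ?hri
    case hi =>
      intro W hW
      simp only [Finset.mem_filter] at hW
      obtain ⟨hW, hMW⟩ := hW
      simp only [Hset, Finset.mem_filter, Finset.mem_powerset] at hW ⊢
      obtain ⟨hsub, hcard, hcond⟩ := hW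
      rw [hamb] at hsub
      refine ⟨?_, ?_, ?_⟩
      · intro x hx
        have hxW := Finset.mem_of_mem_erase hx
        have hxM := Finset.ne_of_mem_erase hx
        have := hsub hxW
        rw [Finset.mem_Icc] at this ⊢
        omega
      · rw [Finset.card_erase_of_mem hMW, hcard]
        omega
      · intro w hw
        have hwW := Finset.mem_of_mem_erase hw
        have hwM : w ≠ M := Finset.ne_of_mem_erase hw
        have hwle : w < M := by
          have := hsub hwW; rw [Finset.mem_Icc] at this; omega
        rw [filter_le_erase W hwle]
        exact hcond w hwW
    case hj =>
      intro W hW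
      simp only [Hset, Finset.mem_filter, Finset.mem_powerset] at hW
      obtain ⟨hsub, hcard, hcond⟩ := hW
      have hMamb : ∀ x ∈ W, x ≤ m + t := by
        intro x hx
        have := hsub hx; rw [Finset.mem_Icc] at this; omega
      have hMW : M ∉ W := by
        intro h; have := hMamb M h; omega
      simp only [Finset.mem_filter]
      refine ⟨?_, Finset.mem_insert_self M W⟩
      simp only [Hset, Finset.mem_filter, Finset.mem_powerset]
      refine ⟨?_, ?_, ?_⟩
      · intro x hx
        rw [Finset.mem_insert] at hx
        rw [hamb, Finset.mem_Icc]
        rcases hx with rfl | hx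
        · omega
        · have h1 := hMamb x hx
          have h2 := hsub hx; rw [Finset.mem_Icc] at h2; omega
      · rw [Finset.card_insert_of_notMem hMW, hcard]
      · intro w hw
        rw [Finset.mem_insert] at hw
        rcases hw with rfl | hw
        · have : (insert M W).filter (· ≤ M) = insert M W := by
            apply Finset.filter_true_of_mem
            intro x hx
            rw [Finset.mem_insert] at hx
            rcases hx with rfl | hx
            · exact le_refl _
            · have := hMamb x hx; omega
          rw [this, Finset.card_insert_of_notMem hMW, hcard]
          omega
        · have hwM : w < M := by have := hMamb w hw; omega
          rw [filter_le_insert W hwM]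
          have := hcond w hw; omega
    case hli =>
      intro W hW
      simp only [Finset.mem_filter] at hW
      exact Finset.insert_erase hW.2
    case hri =>
      intro W hW
      simp only [Hset, Finset.mem_filter, Finset.mem_powerset] at hW
      apply Finset.erase_insert
      intro h
      have := hW.1 h; rw [Finset.mem_Icc] at this; omega
  · -- without M : equals Hset m (t+1)
    congr 1
    ext W
    simp only [Hset, Finset.mem_filter, Finset.mem_powerset]
    constructor
    · rintro ⟨⟨hsub, hcard, hcond⟩, hMW⟩
      rw [hamb] at hsub
      have hamb2 : ∀ x ∈ W, 1 ≤ x ∧ x ≤ m + t := by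
        intro x hx
        have h1 := hsub hx; rw [Finset.mem_Icc] at h1
        have : x ≠ M := fun h => hMW (h ▸ hx)
        omega
      refine ⟨?_, hcard, ?_⟩
      · intro x hx
        rw [Finset.mem_Icc]
        have := hamb2 x hx; omega
      · intro w hw
        by_contra hcon
        push_neg at hcon
        have h1 : w < m + 1 + (W.filter (· ≤ w)).card := hcond w hw
        have hcards : (W.filter (· ≤ w)).card + (W.filter (fun x => ¬ x ≤ w)).card = t + 1 := by
          rw [Finset.card_filter_add_card_filter_not, hcard]
        have hne : (W.filter (fun x => ¬ x ≤ w)).Nonempty := by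
          rw [← Finset.card_pos]
          have hrne : (W.filter (· ≤ w)).card ≠ t + 1 := by
            intro h
            rw [h] at h1 hcon
            have := (hamb2 w hw).2
            omega
          omega
        have hmax := add_card_le_max' (S := W.filter (fun x => ¬ x ≤ w))
          (w := w) (fun x hx => by
            have := (Finset.mem_filter.1 hx).2; omega) hne
        have hmem : (W.filter (fun x => ¬ x ≤ w)).max' hne ∈ W :=
          (Finset.mem_filter.1 (Finset.max'_mem _ hne)).1
        have hub := (hamb2 _ hmem).2
        omega
    · rintro ⟨hsub, hcard, hcond⟩
      have hamb2 : ∀ x ∈ W, 1 ≤ x ∧ x ≤ m + t := by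
        intro x hx
        have := hsub hx; rw [Finset.mem_Icc] at this; omega
      refine ⟨⟨?_, hcard, ?_⟩, ?_⟩
      · intro x hx
        rw [hamb, Finset.mem_Icc]
        have := hamb2 x hx; omega
      · intro w hw
        have := hcond w hw; omega
      · intro h
        have := hamb2 M h; omega

lemma Hset_card : ∀ m t, (Hset m t).card = Nat.multichoose m t := by
  intro m
  induction m with
  | zero =>
    intro t
    cases t with
    | zero => rw [Hset_zero_right]; simp [Nat.multichoose]
    | succ t => rw [Hset_zero_left]; simp [Nat.multichoose_eq, Nat.choose_eq_zero_of_lt]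
  | succ m ihm =>
    intro t
    induction t with
    | zero => rw [Hset_zero_right]; simp [Nat.multichoose]
    | succ t iht =>
      rw [Hset_rec, iht, ihm, Nat.multichoose_succ_succ]
      omega

/-- Valid sets of left endpoints for the tail arcs: `V` avoids `U`, has `t`
elements, and its `r`-th smallest element is `< o + r`. -/
def Vset (o t : ℕ) (U : Finset ℕ) : Finset (Finset ℕ) :=
  (Finset.Icc 1 (o + t - 1)).powerset.filter
    (fun V => V.card = t ∧ (∀ v ∈ V, v ∉ U) ∧ ∀ v ∈ V, v < o + (V.filter (· ≤ v)).card)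

lemma Vset_card (o t m : ℕ) (U : Finset ℕ) (hm : 1 ≤ m) (hU : U ⊆ Finset.Icc 1 (o-1))
    (hUc : U.card + m = o) : (Vset o t U).card = Nat.multichoose m t := by
  classical
  rw [← Hset_card]
  set D := (Finset.Icc 1 (o+t-1)) \ U with hD
  set ι : ℕ → ℕ := fun v => (D.filter (· ≤ v)).card with hι
  have hDsub : U ⊆ Finset.Icc 1 (o+t-1) :=
    subset_trans hU (Finset.Icc_subset_Icc_right (by omega))
  have hDcard : D.card = m + t - 1 := by
    rw [hD, Finset.card_sdiff_of_subset hDsub, Nat.card_Icc]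
    omega
  have hmemD : ∀ d, d ∈ D ↔ (1 ≤ d ∧ d ≤ o+t-1 ∧ d ∉ U) := by
    intro d
    rw [hD, Finset.mem_sdiff, Finset.mem_Icc]
    tauto
  have hmono : ∀ {x y : ℕ}, x ≤ y → ι x ≤ ι y := by
    intro x y hxy
    apply Finset.card_le_card
    intro z hz
    rw [Finset.mem_filter] at hz ⊢
    exact ⟨hz.1, le_trans hz.2 hxy⟩
  have hstrict : ∀ {x y : ℕ}, y ∈ D → x < y → ι x < ι y := by
    intro x y hyD hxy
    apply Finset.card_lt_card
    rw [Finset.ssubset_iff_of_subset]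
    · refine ⟨y, ?_, ?_⟩
      · rw [Finset.mem_filter]; exact ⟨hyD, le_refl _⟩
      · rw [Finset.mem_filter]; push_neg; intro _; omega
    · intro z hz
      rw [Finset.mem_filter] at hz ⊢
      exact ⟨hz.1, by omega⟩
  have hι1 : ∀ d ∈ D, 1 ≤ ι d := fun d hd =>
    Finset.card_pos.2 ⟨d, Finset.mem_filter.2 ⟨hd, le_refl d⟩⟩
  have hιub : ∀ d, ι d ≤ m + t - 1 := by
    intro d
    calc ι d ≤ D.card := Finset.card_le_card (Finset.filter_subset _ _)
    _ = m + t - 1 := hDcard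
  have hcount : ∀ r, 1 ≤ r → r ≤ t → (D.filter (· ≤ o+r-1)).card = m+r-1 := by
    intro r h1 h2
    have heq : D.filter (· ≤ o+r-1) = (Finset.Icc 1 (o+r-1)) \ U := by
      ext d
      rw [Finset.mem_filter, hmemD, Finset.mem_sdiff, Finset.mem_Icc]
      constructor
      · rintro ⟨⟨ha, hb, hc⟩, hd⟩; exact ⟨⟨ha, hd⟩, hc⟩
      · rintro ⟨⟨ha, hd⟩, hc⟩
        exact ⟨⟨ha, by omega, hc⟩, hd⟩
    rw [heq, Finset.card_sdiff_of_subset, Nat.card_Icc]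
    · omega
    · exact subset_trans hU (Finset.Icc_subset_Icc_right (by omega))
  have F3fwd : ∀ {v r}, 1 ≤ r → r ≤ t → v ≤ o+r-1 → ι v ≤ m+r-1 := by
    intro v r h1 h2 h3
    calc ι v ≤ (D.filter (· ≤ o+r-1)).card := hmono h3
    _ = m+r-1 := hcount r h1 h2
  have F3bwd : ∀ {v r}, v ∈ D → 1 ≤ r → r ≤ t → ι v ≤ m+r-1 → v ≤ o+r-1 := by
    intro v r hv h1 h2 h3
    by_contra hcon
    push_neg at hcon
    have hvub := (hmemD v).1 hv
    -- v ≥ o+r, so r+1 ≤ t since v ≤ o+t-1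
    have hrt : r + 1 ≤ t := by omega
    have : (D.filter (· ≤ o+r)).card ≤ ι v := by
      apply Finset.card_le_card
      intro z hz
      rw [Finset.mem_filter] at hz ⊢
      exact ⟨hz.1, by omega⟩
    have hc := hcount (r+1) (by omega) hrt
    have : o + (r+1) - 1 = o + r := by omega
    rw [this] at hc
    omega
  have hinjD : ∀ {x y : ℕ}, x ∈ D → y ∈ D → ι x = ι y → x = y := by
    intro x y hx hy hxy
    rcases lt_trichotomy x y with h | h | h
    · exact absurd hxy (Nat.ne_of_lt (hstrict hy h))
    · exact h
    · exact absurd hxy.symm (Nat.ne_of_lt (hstrict hx h))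
  -- rank preservation
  have F2 : ∀ (V : Finset ℕ), (∀ x ∈ V, x ∈ D) → ∀ v ∈ V,
      ((V.image ι).filter (· ≤ ι v)).card = (V.filter (· ≤ v)).card := by
    intro V hVD v hv
    have heq : (V.image ι).filter (· ≤ ι v) = (V.filter (· ≤ v)).image ι := by
      ext w
      simp only [Finset.mem_filter, Finset.mem_image]
      constructor
      · rintro ⟨⟨x, hx, rfl⟩, hle⟩
        refine ⟨x, ⟨hx, ?_⟩, rfl⟩
        by_contra hcon
        push_neg at hcon
        have := hstrict (hVD x hx) hcon
        omega
      · rintro ⟨x, ⟨hx1, hx2⟩, rfl⟩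
        exact ⟨⟨x, hx1, rfl⟩, hmono hx2⟩
    rw [heq, Finset.card_image_of_injOn]
    intro x hx y hy
    exact hinjD (hVD x (Finset.mem_filter.1 hx).1) (hVD y (Finset.mem_filter.1 hy).1)
  -- the bijection
  apply Finset.card_bij (fun V _ => V.image ι)
  · -- maps into Hset
    intro V hV
    simp only [Vset, Finset.mem_filter, Finset.mem_powerset] at hV
    obtain ⟨hVsub, hVcard, hVU, hVcond⟩ := hV
    have hVD : ∀ x ∈ V, x ∈ D := by
      intro x hx
      rw [hmemD]
      have := hVsub hx; rw [Finset.mem_Icc] at this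
      exact ⟨this.1, this.2, hVU x hx⟩
    simp only [Hset, Finset.mem_filter, Finset.mem_powerset]
    refine ⟨?_, ?_, ?_⟩
    · intro w hw
      rw [Finset.mem_image] at hw
      obtain ⟨x, hx, rfl⟩ := hw
      rw [Finset.mem_Icc]
      exact ⟨hι1 x (hVD x hx), hιub x⟩
    · rw [Finset.card_image_of_injOn, hVcard]
      intro x hx y hy
      exact hinjD (hVD x hx) (hVD y hy)
    · intro w hw
      rw [Finset.mem_image] at hw
      obtain ⟨v, hv, rfl⟩ := hw
      rw [F2 V hVD v hv]
      have hr1 : 1 ≤ (V.filter (· ≤ v)).card :=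
        Finset.card_pos.2 ⟨v, Finset.mem_filter.2 ⟨hv, le_refl _⟩⟩
      have hrt : (V.filter (· ≤ v)).card ≤ t := by
        rw [← hVcard]; exact Finset.card_le_card (Finset.filter_subset _ _)
      have := hVcond v hv
      have := F3fwd hr1 hrt (v := v) (by omega)
      omega
  · -- injective
    intro V hV V' hV' heq
    simp only [Vset, Finset.mem_filter, Finset.mem_powerset] at hV hV'
    have hVD : ∀ x ∈ V, x ∈ D := by
      intro x hx
      rw [hmemD]
      have := hV.1 hx; rw [Finset.mem_Icc] at this
      exact ⟨this.1, this.2, hV.2.2.1 x hx⟩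
    have hVD' : ∀ x ∈ V', x ∈ D := by
      intro x hx
      rw [hmemD]
      have := hV'.1 hx; rw [Finset.mem_Icc] at this
      exact ⟨this.1, this.2, hV'.2.2.1 x hx⟩
    ext x
    constructor
    · intro hx
      have : ι x ∈ V'.image ι := heq ▸ (Finset.mem_image_of_mem ι hx)
      rw [Finset.mem_image] at this
      obtain ⟨y, hy, hxy⟩ := this
      rwa [hinjD (hVD' y hy) (hVD x hx) hxy] at hy
    · intro hx
      have : ι x ∈ V.image ι := heq ▸ (Finset.mem_image_of_mem ι hx)
      rw [Finset.mem_image] at this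
      obtain ⟨y, hy, hxy⟩ := this
      rwa [hinjD (hVD y hy) (hVD' x hx) hxy] at hy
  · -- surjective
    intro W hW
    simp only [Hset, Finset.mem_filter, Finset.mem_powerset] at hW
    obtain ⟨hWsub, hWcard, hWcond⟩ := hW
    -- every w in [1, m+t-1] is ι of some d in D
    have hsurj : ∀ w ∈ Finset.Icc 1 (m+t-1), ∃ d, ∃ (hd : d ∈ D), ι d = w := by
      have := Finset.surj_on_of_inj_on_of_card_le (s := D) (t := Finset.Icc 1 (m+t-1))
        (f := fun d _ => ι d)
        (fun d hd => Finset.mem_Icc.2 ⟨hι1 d hd, hιub d⟩)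
        (fun x y hx hy h => hinjD hx hy h)
        (by rw [hDcard, Nat.card_Icc]; omega)
      intro w hw
      obtain ⟨d, hd, hdw⟩ := this w hw
      exact ⟨d, hd, hdw.symm⟩
    set V := D.filter (fun d => ι d ∈ W) with hV
    have hVD : ∀ x ∈ V, x ∈ D := fun x hx => (Finset.mem_filter.1 hx).1
    have himg : V.image ι = W := by
      ext w
      simp only [Finset.mem_image]
      constructor
      · rintro ⟨x, hx, rfl⟩
        exact (Finset.mem_filter.1 hx).2
      · intro hw
        obtain ⟨d, hd, hdw⟩ := hsurj w (hWsub hw)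
        exact ⟨d, Finset.mem_filter.2 ⟨hd, hdw ▸ hw⟩, hdw⟩
    refine ⟨V, ?_, himg⟩
    simp only [Vset, Finset.mem_filter, Finset.mem_powerset]
    have hVcard : V.card = t := by
      rw [← hWcard, ← himg, Finset.card_image_of_injOn]
      intro x hx y hy
      exact hinjD (hVD x hx) (hVD y hy)
    refine ⟨?_, hVcard, ?_, ?_⟩
    · intro x hx
      have := (hmemD x).1 (hVD x hx)
      rw [Finset.mem_Icc]
      exact ⟨this.1, this.2.1⟩
    · intro v hv
      exact ((hmemD v).1 (hVD v hv)).2.2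
    · intro v hv
      have hιW : ι v ∈ W := (Finset.mem_filter.1 hv).2
      have hcond := hWcond _ hιW
      have hF2 := F2 V hVD v hv
      rw [himg] at hF2
      have hr1 : 1 ≤ (V.filter (· ≤ v)).card :=
        Finset.card_pos.2 ⟨v, Finset.mem_filter.2 ⟨hv, le_refl _⟩⟩
      have hrt : (V.filter (· ≤ v)).card ≤ t := by
        rw [← hVcard]; exact Finset.card_le_card (Finset.filter_subset _ _)
      have := F3bwd (hVD v hv) hr1 hrt (v := v) (by omega)
      omega

def Sset (n k : ℕ) : Finset (Finset (ℕ × ℕ)) :=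
  ((Finset.Icc 1 n ×ˢ Finset.Icc 1 n).powerset).filter
    (fun A => A.card = k ∧
      (∀ p ∈ A, p.1 < p.2) ∧
      (∀ p ∈ A, ∀ q ∈ A, p.1 = q.1 → p = q) ∧
      (∀ p ∈ A, ∀ q ∈ A, p.2 = q.2 → p = q) ∧
      (∀ p ∈ A, ∀ q ∈ A, p.2 + 1 = q.2 → ¬ q.1 < p.1))

lemma mem_Sset_iff {n k : ℕ} {A : Finset (ℕ × ℕ)} :
    A ∈ Sset n k ↔
      (∀ p ∈ A, 1 ≤ p.1 ∧ p.1 < p.2 ∧ p.2 ≤ n) ∧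
      (∀ p ∈ A, ∀ q ∈ A, p.1 = q.1 → p = q) ∧
      (∀ p ∈ A, ∀ q ∈ A, p.2 = q.2 → p = q) ∧
      (∀ p ∈ A, ∀ q ∈ A, p.2 + 1 = q.2 → ¬ q.1 < p.1) ∧
      A.card = k := by
  simp only [Sset, Finset.mem_filter, Finset.mem_powerset]
  constructor
  · rintro ⟨hsub, hcard, hlt, h2, h3, h4⟩
    refine ⟨?_, h2, h3, h4, hcard⟩
    intro p hp
    have := hsub hp
    rw [Finset.mem_product, Finset.mem_Icc, Finset.mem_Icc] at this
    exact ⟨this.1.1, hlt p hp, this.2.2⟩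
  · rintro ⟨hb, h2, h3, h4, hcard⟩
    refine ⟨?_, hcard, fun p hp => (hb p hp).2.1, h2, h3, h4⟩
    intro p hp
    have := hb p hp
    rw [Finset.mem_product, Finset.mem_Icc, Finset.mem_Icc]
    omega

/-- The largest element of `[1,n]` that is not a right endpoint of `A`. -/
def oA (n : ℕ) (A : Finset (ℕ × ℕ)) : ℕ := ((Finset.Icc 1 n) \ A.image Prod.snd).sup id

lemma card_rights {n k : ℕ} {A : Finset (ℕ × ℕ)} (hA : A ∈ Sset n k) :
    (A.image Prod.snd).card = k := by
  rw [mem_Sset_iff] at hA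
  rw [Finset.card_image_of_injOn, hA.2.2.2.2]
  intro p hp q hq hpq
  exact hA.2.2.1 p hp q hq hpq

lemma card_lefts {n k : ℕ} {A : Finset (ℕ × ℕ)} (hA : A ∈ Sset n k) :
    (A.image Prod.fst).card = k := by
  rw [mem_Sset_iff] at hA
  rw [Finset.card_image_of_injOn, hA.2.2.2.2]
  intro p hp q hq hpq
  exact hA.2.1 p hp q hq hpq

lemma oA_spec {n k : ℕ} {A : Finset (ℕ × ℕ)} (hA : A ∈ Sset n k) (hkn : k < n) :
    (1 ≤ oA n A ∧ oA n A ≤ n) ∧ oA n A ∉ A.image Prod.snd ∧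
      (∀ j, oA n A < j → j ≤ n → j ∈ A.image Prod.snd) := by
  have hRsub : A.image Prod.snd ⊆ Finset.Icc 1 n := by
    intro j hj
    rw [Finset.mem_image] at hj
    obtain ⟨p, hp, rfl⟩ := hj
    have := (mem_Sset_iff.1 hA).1 p hp
    rw [Finset.mem_Icc]
    omega
  have hOne : ((Finset.Icc 1 n) \ A.image Prod.snd).Nonempty := by
    by_contra hcon
    rw [Finset.not_nonempty_iff_eq_empty, Finset.sdiff_eq_empty_iff_subset] at hcon
    have h1 := Finset.card_le_card hcon
    rw [Nat.card_Icc, card_rights hA] at h1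
    omega
  obtain ⟨b, hb, hob⟩ := Finset.exists_mem_eq_sup _ hOne id
  have hbO : oA n A ∈ (Finset.Icc 1 n) \ A.image Prod.snd := by
    rw [oA, hob]; exact hb
  rw [Finset.mem_sdiff, Finset.mem_Icc] at hbO
  refine ⟨hbO.1, hbO.2, ?_⟩
  intro j hoj hjn
  by_contra hcon
  have hjO : j ∈ (Finset.Icc 1 n) \ A.image Prod.snd := by
    rw [Finset.mem_sdiff, Finset.mem_Icc]
    exact ⟨⟨by omega, hjn⟩, hcon⟩
  have := Finset.le_sup (f := id) hjO
  rw [← oA] at this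
  simp only [id] at this
  omega

lemma step_lt {n k : ℕ} {A : Finset (ℕ × ℕ)} (hA : A ∈ Sset n k) :
    ∀ p ∈ A, ∀ q ∈ A, p.2 + 1 = q.2 → p.1 < q.1 := by
  rw [mem_Sset_iff] at hA
  intro p hp q hq hpq
  have h4 := hA.2.2.2.1 p hp q hq hpq
  have hne : p.1 ≠ q.1 := by
    intro h
    have := hA.2.1 p hp q hq h
    rw [this] at hpq
    omega
  omega

lemma tail_mono {n k : ℕ} {A : Finset (ℕ × ℕ)} (hA : A ∈ Sset n k) (hkn : k < n) :
    ∀ p ∈ A.filter (fun p => oA n A < p.2), ∀ q ∈ A.filter (fun p => oA n A < p.2),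
      p.2 < q.2 → p.1 < q.1 := by
  have hspec := oA_spec hA hkn
  suffices h : ∀ d : ℕ, ∀ p ∈ A.filter (fun p => oA n A < p.2),
      ∀ q ∈ A.filter (fun p => oA n A < p.2), q.2 = p.2 + d + 1 → p.1 < q.1 by
    intro p hp q hq hlt
    exact h (q.2 - p.2 - 1) p hp q hq (by omega)
  intro d
  induction d with
  | zero =>
    intro p hp q hq hd
    rw [Finset.mem_filter] at hp hq
    exact step_lt hA p hp.1 q hq.1 (by omega)
  | succ d ih =>
    intro p hp q hq hd
    rw [Finset.mem_filter] at hp hq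
    have hq2n : q.2 ≤ n := ((mem_Sset_iff.1 hA).1 q hq.1).2.2
    have hr : p.2 + 1 ∈ A.image Prod.snd := by
      apply hspec.2.2
      · omega
      · omega
    rw [Finset.mem_image] at hr
    obtain ⟨r, hrA, hr2⟩ := hr
    have hrtail : r ∈ A.filter (fun p => oA n A < p.2) := by
      rw [Finset.mem_filter]
      refine ⟨hrA, ?_⟩
      have := hp.2; (try simp only at this ⊢); omega
    have h1 : p.1 < r.1 := step_lt hA p hp.1 r hrA (by omega)
    have h2 : r.1 < q.1 := ih r hrtail q (Finset.mem_filter.2 hq) (by omega)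
    omega

lemma tail_snd_image {n k : ℕ} {A : Finset (ℕ × ℕ)} (hA : A ∈ Sset n k) (hkn : k < n) :
    (A.filter (fun p => oA n A < p.2)).image Prod.snd = Finset.Icc (oA n A + 1) n := by
  have hspec := oA_spec hA hkn
  ext j
  rw [Finset.mem_image, Finset.mem_Icc]
  constructor
  · rintro ⟨p, hp, rfl⟩
    rw [Finset.mem_filter] at hp
    have := (mem_Sset_iff.1 hA).1 p hp.1
    have := hp.2
    try simp only at this
    omega
  · rintro ⟨h1, h2⟩
    have := hspec.2.2 j (by omega) h2
    rw [Finset.mem_image] at this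
    obtain ⟨p, hp, rfl⟩ := this
    refine ⟨p, ?_, rfl⟩
    rw [Finset.mem_filter]
    exact ⟨hp, by omega⟩

lemma card_tail {n k : ℕ} {A : Finset (ℕ × ℕ)} (hA : A ∈ Sset n k) (hkn : k < n) :
    (A.filter (fun p => oA n A < p.2)).card = n - oA n A := by
  have h1 : ((A.filter (fun p => oA n A < p.2)).image Prod.snd).card
      = (A.filter (fun p => oA n A < p.2)).card := by
    apply Finset.card_image_of_injOn
    intro p hp q hq hpq
    replace hp := Finset.mem_filter.1 (Finset.mem_coe.1 hp)
    replace hq := Finset.mem_filter.1 (Finset.mem_coe.1 hq)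
    exact (mem_Sset_iff.1 hA).2.2.1 p hp.1 q hq.1 hpq
  rw [← h1, tail_snd_image hA hkn, Nat.card_Icc]
  omega

lemma rank_eq {n k : ℕ} {A : Finset (ℕ × ℕ)} (hA : A ∈ Sset n k) (hkn : k < n) :
    ∀ p ∈ A.filter (fun p => oA n A < p.2),
      ((((A.filter (fun p => oA n A < p.2)).image Prod.fst).filter (· ≤ p.1)).card)
        = p.2 - oA n A := by
  intro p hp
  set T := A.filter (fun p => oA n A < p.2) with hT
  have hfst_inj : ∀ x ∈ T, ∀ y ∈ T, x.1 = y.1 → x = y := by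
    intro x hx y hy
    rw [hT, Finset.mem_filter] at hx hy
    exact (mem_Sset_iff.1 hA).2.1 x hx.1 y hy.1
  have heq : (T.image Prod.fst).filter (· ≤ p.1)
      = (T.filter (fun q => q.2 ≤ p.2)).image Prod.fst := by
    ext v
    simp only [Finset.mem_filter, Finset.mem_image]
    constructor
    · rintro ⟨⟨q, hq, rfl⟩, hle⟩
      refine ⟨q, ⟨hq, ?_⟩, rfl⟩
      by_contra hcon
      push_neg at hcon
      have := tail_mono hA hkn p hp q hq (by omega)
      omega
    · rintro ⟨q, ⟨hq, hle⟩, rfl⟩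
      refine ⟨⟨q, hq, rfl⟩, ?_⟩
      rcases eq_or_ne q p with rfl | hne
      · exact le_refl _
      · have hne2 : q.2 ≠ p.2 := by
          intro h
          rw [hT, Finset.mem_filter] at hq hp
          exact hne ((mem_Sset_iff.1 hA).2.2.1 q hq.1 p hp.1 h)
        have := tail_mono hA hkn q hq p hp (by omega)
        omega
  rw [heq, Finset.card_image_of_injOn
    (fun x hx y hy => hfst_inj x (Finset.mem_filter.1 (Finset.mem_coe.1 hx)).1 y
      (Finset.mem_filter.1 (Finset.mem_coe.1 hy)).1)]
  have heq2 : (T.filter (fun q => q.2 ≤ p.2)).image Prod.snd = Finset.Icc (oA n A + 1) p.2 := by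
    ext j
    simp only [Finset.mem_image, Finset.mem_Icc]
    constructor
    · rintro ⟨q, hq, rfl⟩
      rw [Finset.mem_filter, hT, Finset.mem_filter] at hq
      have := hq.1.2
      try simp only at this
      exact ⟨by omega, hq.2⟩
    · rintro ⟨h1, h2⟩
      have hp2n : p.2 ≤ n := ((mem_Sset_iff.1 hA).1 p (Finset.mem_filter.1 hp).1).2.2
      have := (oA_spec hA hkn).2.2 j (by omega) (by omega)
      rw [Finset.mem_image] at this
      obtain ⟨q, hq, rfl⟩ := this
      refine ⟨q, ?_, rfl⟩
      rw [Finset.mem_filter, hT, Finset.mem_filter]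
      exact ⟨⟨hq, by omega⟩, h2⟩
  have h3 : ((T.filter (fun q => q.2 ≤ p.2)).image Prod.snd).card
      = (T.filter (fun q => q.2 ≤ p.2)).card := by
    apply Finset.card_image_of_injOn
    intro x hx y hy hxy
    replace hx := Finset.mem_coe.1 hx
    replace hy := Finset.mem_coe.1 hy
    rw [Finset.mem_filter, hT, Finset.mem_filter] at hx hy
    exact (mem_Sset_iff.1 hA).2.2.1 x hx.1.1 y hy.1.1 hxy
  rw [← h3, heq2, Nat.card_Icc]
  omega

lemma tail_char {n k : ℕ} {A : Finset (ℕ × ℕ)} (hA : A ∈ Sset n k) (hkn : k < n)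
    (p : ℕ × ℕ) :
    p ∈ A.filter (fun p => oA n A < p.2) ↔
      p.1 ∈ (A.filter (fun p => oA n A < p.2)).image Prod.fst ∧
      p.2 = oA n A + ((((A.filter (fun p => oA n A < p.2)).image Prod.fst).filter
        (· ≤ p.1)).card) := by
  constructor
  · intro hp
    refine ⟨Finset.mem_image_of_mem _ hp, ?_⟩
    rw [rank_eq hA hkn p hp]
    have := (Finset.mem_filter.1 hp).2
    try simp only at this
    omega
  · rintro ⟨hv, hp2⟩
    rw [Finset.mem_image] at hv
    obtain ⟨q, hq, hq1⟩ := hv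
    have hq2 : q.2 = oA n A + ((((A.filter (fun p => oA n A < p.2)).image Prod.fst).filter
        (· ≤ q.1)).card) := by
      rw [rank_eq hA hkn q hq]
      have := (Finset.mem_filter.1 hq).2
      try simp only at this
      omega
    have : p = q := by
      apply Prod.ext
      · exact hq1.symm
      · rw [hp2, hq2, hq1]
    rw [this]
    exact hq

lemma rank_le_rank (V : Finset ℕ) {x y : ℕ} (hxy : x ≤ y) :
    (V.filter (· ≤ x)).card ≤ (V.filter (· ≤ y)).card := by
  apply Finset.card_le_card
  intro z hz
  rw [Finset.mem_filter] at hz ⊢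
  exact ⟨hz.1, by omega⟩

lemma rank_lt_rank {V : Finset ℕ} {x y : ℕ} (hy : y ∈ V) (hxy : x < y) :
    (V.filter (· ≤ x)).card < (V.filter (· ≤ y)).card := by
  apply Finset.card_lt_card
  rw [Finset.ssubset_iff_of_subset]
  · exact ⟨y, Finset.mem_filter.2 ⟨hy, le_refl _⟩,
      fun hc => absurd (Finset.mem_filter.1 hc).2 (by omega)⟩
  · intro z hz
    rw [Finset.mem_filter] at hz ⊢
    exact ⟨hz.1, by omega⟩

lemma rank_one_le {V : Finset ℕ} {v : ℕ} (hv : v ∈ V) :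
    1 ≤ (V.filter (· ≤ v)).card :=
  Finset.card_pos.2 ⟨v, Finset.mem_filter.2 ⟨hv, le_refl _⟩⟩

lemma rnk_le_card (V : Finset ℕ) (v : ℕ) : (V.filter (· ≤ v)).card ≤ V.card :=
  Finset.card_le_card (Finset.filter_subset _ _)

lemma rank_injOn {V : Finset ℕ} {x y : ℕ} (hx : x ∈ V) (hy : y ∈ V)
    (h : (V.filter (· ≤ x)).card = (V.filter (· ≤ y)).card) : x = y := by
  rcases lt_trichotomy x y with hl | hl | hl
  · exact absurd h (Nat.ne_of_lt (rank_lt_rank hy hl))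
  · exact hl
  · exact absurd h.symm (Nat.ne_of_lt (rank_lt_rank hx hl))

lemma rank_image {V : Finset ℕ} : V.image (fun v => (V.filter (· ≤ v)).card)
    = Finset.Icc 1 V.card := by
  apply Finset.eq_of_subset_of_card_le
  · intro s hs
    rw [Finset.mem_image] at hs
    obtain ⟨v, hv, rfl⟩ := hs
    rw [Finset.mem_Icc]
    exact ⟨rank_one_le hv, rnk_le_card V v⟩
  · rw [Nat.card_Icc, Finset.card_image_of_injOn (fun x hx y hy h => rank_injOn hx hy h)]
    omega



/-- Reconstruction: gluing a valid `A₀` and a valid tail-set `V`. -/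
lemma recon {m k t : ℕ} (hm : 1 ≤ m) (ht : t ≤ k) {A₀ : Finset (ℕ × ℕ)} {V : Finset ℕ}
    (hA₀ : A₀ ∈ Sset (m+k-t-1) (k-t))
    (hV : V ∈ Vset (m+k-t) t (A₀.image Prod.fst)) :
    (A₀ ∪ V.image (fun v => (v, (m+k-t) + (V.filter (· ≤ v)).card))) ∈ Sset (m+k) k ∧
    oA (m+k) (A₀ ∪ V.image (fun v => (v, (m+k-t) + (V.filter (· ≤ v)).card))) = m+k-t ∧
    (A₀ ∪ V.image (fun v => (v, (m+k-t) + (V.filter (· ≤ v)).card))).filter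
      (fun p => p.2 < m+k-t) = A₀ ∧
    (A₀ ∪ V.image (fun v => (v, (m+k-t) + (V.filter (· ≤ v)).card))).filter
      (fun p => m+k-t < p.2) = V.image (fun v => (v, (m+k-t) + (V.filter (· ≤ v)).card)) := by
  classical
  set o := m + k - t with ho
  have hom : m ≤ o := by omega
  set tl := V.image (fun v => (v, o + (V.filter (· ≤ v)).card)) with htl
  rw [mem_Sset_iff] at hA₀
  obtain ⟨hb₀, h2₀, h3₀, h4₀, hc₀⟩ := hA₀
  have hb₀' : ∀ p ∈ A₀, 1 ≤ p.1 ∧ p.1 < p.2 ∧ p.2 ≤ o - 1 := by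
    intro p hp
    have := hb₀ p hp
    omega
  simp only [Vset, Finset.mem_filter, Finset.mem_powerset] at hV
  obtain ⟨hVsub, hVcard, hVU, hVcond⟩ := hV
  have hV1 : ∀ v ∈ V, 1 ≤ v := by
    intro v hv
    have := hVsub hv; rw [Finset.mem_Icc] at this; omega
  have htlmem : ∀ p, p ∈ tl ↔ ∃ v ∈ V, (v, o + (V.filter (· ≤ v)).card) = p := by
    intro p; rw [htl, Finset.mem_image]
  have htlb : ∀ p ∈ tl, 1 ≤ p.1 ∧ p.1 < p.2 ∧ o + 1 ≤ p.2 ∧ p.2 ≤ o + t := by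
    intro p hp
    rw [htlmem] at hp
    obtain ⟨v, hv, rfl⟩ := hp
    have h1 := hV1 v hv
    have h2 := hVcond v hv
    have h3 := rank_one_le hv
    have h4 := hVcard ▸ rnk_le_card V v
    simp only
    omega
  have hdisj : Disjoint A₀ tl := by
    rw [Finset.disjoint_left]
    intro p hp hptl
    have := (hb₀' p hp).2.2
    have := (htlb p hptl).2.2.1
    omega
  have hcardtl : tl.card = t := by
    rw [htl, Finset.card_image_of_injOn, hVcard]
    intro x _ y _ h
    exact congrArg Prod.fst h
  have hmem : (A₀ ∪ tl) ∈ Sset (m+k) k := by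
    rw [mem_Sset_iff]
    refine ⟨?_, ?_, ?_, ?_, ?_⟩
    · intro p hp
      rw [Finset.mem_union] at hp
      rcases hp with hp | hp
      · have := hb₀' p hp; omega
      · have := htlb p hp; omega
    · intro p hp q hq h
      rw [Finset.mem_union] at hp hq
      rcases hp with hp | hp <;> rcases hq with hq | hq
      · exact h2₀ p hp q hq h
      · exfalso
        rw [htlmem] at hq
        obtain ⟨v, hv, rfl⟩ := hq
        simp only at h
        exact hVU v hv (h ▸ Finset.mem_image_of_mem Prod.fst hp)
      · exfalso
        rw [htlmem] at hp
        obtain ⟨v, hv, rfl⟩ := hp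
        simp only at h
        exact hVU v hv (by rw [h]; exact Finset.mem_image_of_mem Prod.fst hq)
      · rw [htlmem] at hp hq
        obtain ⟨v, hv, rfl⟩ := hp
        obtain ⟨w, hw, rfl⟩ := hq
        simp only at h
        rw [h]
    · intro p hp q hq h
      rw [Finset.mem_union] at hp hq
      rcases hp with hp | hp <;> rcases hq with hq | hq
      · exact h3₀ p hp q hq h
      · exfalso
        have := (hb₀' p hp).2.2
        have := (htlb q hq).2.2.1
        omega
      · exfalso
        have := (hb₀' q hq).2.2
        have := (htlb p hp).2.2.1
        omega
      · rw [htlmem] at hp hq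
        obtain ⟨v, hv, rfl⟩ := hp
        obtain ⟨w, hw, rfl⟩ := hq
        simp only at h
        have := rank_injOn hv hw (by omega)
        rw [this]
    · intro p hp q hq h
      rw [Finset.mem_union] at hp hq
      rcases hp with hp | hp <;> rcases hq with hq | hq
      · exact h4₀ p hp q hq h
      · exfalso
        have := (hb₀' p hp).2.2
        have := (htlb q hq).2.2.1
        omega
      · exfalso
        have := (htlb p hp).2.2.1
        have := (hb₀' q hq).2.2
        omega
      · rw [htlmem] at hp hq
        obtain ⟨v, hv, rfl⟩ := hp
        obtain ⟨w, hw, rfl⟩ := hq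
        simp only at h ⊢
        intro hlt
        have := rank_lt_rank hv hlt
        omega
    · rw [Finset.card_union_of_disjoint hdisj, hcardtl, hc₀]
      omega
  have hrights : ∀ x, o < x → x ≤ m + k → x ∈ (A₀ ∪ tl).image Prod.snd := by
    intro x hox hxn
    have hs : x - o ∈ Finset.Icc 1 t := by rw [Finset.mem_Icc]; omega
    rw [← hVcard, ← rank_image, Finset.mem_image] at hs
    obtain ⟨v, hv, hrv⟩ := hs
    rw [Finset.mem_image]
    refine ⟨(v, o + (V.filter (· ≤ v)).card), ?_, by simp only; omega⟩
    rw [Finset.mem_union, htlmem]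
    exact Or.inr ⟨v, hv, rfl⟩
  have h_o_not : o ∉ (A₀ ∪ tl).image Prod.snd := by
    rw [Finset.mem_image]
    rintro ⟨p, hp, hp2⟩
    rw [Finset.mem_union] at hp
    rcases hp with hp | hp
    · have := (hb₀' p hp).2.2; omega
    · have := (htlb p hp).2.2.1; omega
  have hoA : oA (m+k) (A₀ ∪ tl) = o := by
    rw [oA]
    apply le_antisymm
    · apply Finset.sup_le
      intro x hx
      rw [Finset.mem_sdiff, Finset.mem_Icc] at hx
      simp only [id]
      by_contra hcon
      push_neg at hcon
      exact hx.2 (hrights x hcon hx.1.2)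
    · have : o ∈ (Finset.Icc 1 (m+k)) \ (A₀ ∪ tl).image Prod.snd := by
        rw [Finset.mem_sdiff, Finset.mem_Icc]
        exact ⟨⟨by omega, by omega⟩, h_o_not⟩
      exact Finset.le_sup (f := id) this
  have hfilt1 : (A₀ ∪ tl).filter (fun p => p.2 < o) = A₀ := by
    rw [Finset.filter_union]
    have e1 : A₀.filter (fun p => p.2 < o) = A₀ :=
      Finset.filter_true_of_mem (fun p hp => by have := (hb₀' p hp).2.2; omega)
    have e2 : tl.filter (fun p => p.2 < o) = ∅ :=
      Finset.filter_false_of_mem (fun p hp => by have := (htlb p hp).2.2.1; omega)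
    rw [e1, e2, Finset.union_empty]
  have hfilt2 : (A₀ ∪ tl).filter (fun p => o < p.2) = tl := by
    rw [Finset.filter_union]
    have e1 : A₀.filter (fun p => o < p.2) = ∅ :=
      Finset.filter_false_of_mem (fun p hp => by have := (hb₀' p hp).2.2; omega)
    have e2 : tl.filter (fun p => o < p.2) = tl :=
      Finset.filter_true_of_mem (fun p hp => by have := (htlb p hp).2.2.1; omega)
    rw [e1, e2, Finset.empty_union]
  exact ⟨hmem, hoA, hfilt1, hfilt2⟩

lemma t_le_k {n k : ℕ} {A : Finset (ℕ × ℕ)} (hA : A ∈ Sset n k) (hkn : k < n) :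
    n - oA n A ≤ k := by
  have h := tail_snd_image hA hkn
  have h2 : (Finset.Icc (oA n A + 1) n).card ≤ (A.image Prod.snd).card := by
    rw [← h]
    exact Finset.card_le_card (Finset.image_subset_image (Finset.filter_subset _ _))
  rw [Nat.card_Icc, card_rights hA] at h2
  omega

lemma split_card {n k : ℕ} {A : Finset (ℕ × ℕ)} (hA : A ∈ Sset n k) (hkn : k < n) :
    (A.filter (fun p => p.2 < oA n A)).card + (n - oA n A) = k := by
  have hnot := (oA_spec hA hkn).2.1
  have hdisj : Disjoint (A.filter (fun p => p.2 < oA n A)) (A.filter (fun p => oA n A < p.2)) := by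
    rw [Finset.disjoint_left]
    intro p hp hq
    have h1 := (Finset.mem_filter.1 hp).2
    have h2 := (Finset.mem_filter.1 hq).2
    try simp only at h1 h2
    omega
  have hsplit : A.filter (fun p => p.2 < oA n A) ∪ A.filter (fun p => oA n A < p.2) = A := by
    ext p
    rw [Finset.mem_union, Finset.mem_filter, Finset.mem_filter]
    constructor
    · rintro (h | h) <;> exact h.1
    · intro hp
      have hne : p.2 ≠ oA n A := by
        intro h
        exact hnot (h ▸ Finset.mem_image_of_mem Prod.snd hp)
      rcases lt_or_gt_of_ne hne with h | h
      · exact Or.inl ⟨hp, h⟩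
      · exact Or.inr ⟨hp, h⟩
  have halt := Finset.card_union_of_disjoint hdisj
  rw [hsplit, card_tail hA hkn, (mem_Sset_iff.1 hA).2.2.2.2] at halt
  omega

lemma A0_mem {n k : ℕ} {A : Finset (ℕ × ℕ)} (hA : A ∈ Sset n k) (hkn : k < n) :
    A.filter (fun p => p.2 < oA n A) ∈ Sset (oA n A - 1) (k - (n - oA n A)) := by
  rw [mem_Sset_iff] at hA ⊢
  obtain ⟨hb, h2, h3, h4, hc⟩ := hA
  refine ⟨?_, ?_, ?_, ?_, ?_⟩
  · intro p hp
    rw [Finset.mem_filter] at hp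
    have h1 := hb p hp.1
    have h5 := hp.2
    try simp only at h5
    omega
  · intro p hp q hq h
    exact h2 p (Finset.mem_filter.1 hp).1 q (Finset.mem_filter.1 hq).1 h
  · intro p hp q hq h
    exact h3 p (Finset.mem_filter.1 hp).1 q (Finset.mem_filter.1 hq).1 h
  · intro p hp q hq h
    exact h4 p (Finset.mem_filter.1 hp).1 q (Finset.mem_filter.1 hq).1 h
  · have := split_card (mem_Sset_iff.2 ⟨hb, h2, h3, h4, hc⟩) hkn
    omega

lemma decomp {m k t : ℕ} (hm : 1 ≤ m) {A : Finset (ℕ × ℕ)}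
    (hA : A ∈ Sset (m+k) k) (hoA : m + k - oA (m+k) A = t) :
    t ≤ k ∧ oA (m+k) A = m + k - t ∧
    A.filter (fun p => p.2 < m+k-t) ∈ Sset (m+k-t-1) (k-t) ∧
    (A.filter (fun p => m+k-t < p.2)).image Prod.fst
      ∈ Vset (m+k-t) t ((A.filter (fun p => p.2 < m+k-t)).image Prod.fst) ∧
    A = A.filter (fun p => p.2 < m+k-t) ∪
      ((A.filter (fun p => m+k-t < p.2)).image Prod.fst).image
        (fun v => (v, (m+k-t) +
          ((((A.filter (fun p => m+k-t < p.2)).image Prod.fst)).filter (· ≤ v)).card)) := by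
  have hkn : k < m + k := by omega
  have hspec := oA_spec hA hkn
  have htk : t ≤ k := hoA ▸ t_le_k hA hkn
  have hoeq : oA (m+k) A = m + k - t := by omega
  refine ⟨htk, hoeq, ?_, ?_, ?_⟩
  · have := A0_mem hA hkn
    rw [hoeq] at this
    have harith : k - (m + k - (m+k-t)) = k - t := by omega
    rw [harith] at this
    exact this
  · rw [← hoeq]
    simp only [Vset, Finset.mem_filter, Finset.mem_powerset]
    have hcardV : ((A.filter (fun p => oA (m+k) A < p.2)).image Prod.fst).card = t := by
      rw [Finset.card_image_of_injOn, card_tail hA hkn, hoeq]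
      · omega
      · intro p hp q hq h
        replace hp := Finset.mem_filter.1 (Finset.mem_coe.1 hp)
        replace hq := Finset.mem_filter.1 (Finset.mem_coe.1 hq)
        exact (mem_Sset_iff.1 hA).2.1 p hp.1 q hq.1 h
    refine ⟨?_, hcardV, ?_, ?_⟩
    · intro v hv
      rw [Finset.mem_image] at hv
      obtain ⟨p, hp, rfl⟩ := hv
      have h1 := (mem_Sset_iff.1 hA).1 p (Finset.mem_filter.1 hp).1
      have h2 := rank_eq hA hkn p hp
      have h3 := (Finset.mem_filter.1 hp).2
      try simp only at h3
      have h4 : ((((A.filter (fun p => oA (m+k) A < p.2)).image Prod.fst)).filter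
          (· ≤ p.1)).card ≤ t := by
        rw [← hcardV]
        exact Finset.card_le_card (Finset.filter_subset _ _)
      rw [Finset.mem_Icc]
      constructor
      · omega
      · -- p.1 < p.2 = oA + rank ≤ oA + t
        omega
    · intro v hv
      rw [Finset.mem_image] at hv
      obtain ⟨p, hp, rfl⟩ := hv
      intro hcon
      rw [Finset.mem_image] at hcon
      obtain ⟨q, hq, hq1⟩ := hcon
      have hqA := (Finset.mem_filter.1 hq).1
      have hpA := (Finset.mem_filter.1 hp).1
      have := (mem_Sset_iff.1 hA).2.1 q hqA p hpA hq1
      rw [this] at hq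
      have hq2 := (Finset.mem_filter.1 hq).2
      have hp2 := (Finset.mem_filter.1 hp).2
      try simp only at hq2 hp2
      rw [hoeq] at hq2 hp2
      omega
    · intro v hv
      rw [Finset.mem_image] at hv
      obtain ⟨p, hp, rfl⟩ := hv
      have h1 := (mem_Sset_iff.1 hA).1 p (Finset.mem_filter.1 hp).1
      have h2 := rank_eq hA hkn p hp
      have h3 := (Finset.mem_filter.1 hp).2
      try simp only at h3
      omega
  · rw [← hoeq]
    ext p
    rw [Finset.mem_union]
    constructor
    · intro hp
      have hne : p.2 ≠ oA (m+k) A := by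
        intro h
        exact hspec.2.1 (h ▸ Finset.mem_image_of_mem Prod.snd hp)
      rcases lt_or_gt_of_ne hne with hlt | hgt
      · exact Or.inl (Finset.mem_filter.2 ⟨hp, hlt⟩)
      · right
        have hptail : p ∈ A.filter (fun p => oA (m+k) A < p.2) :=
          Finset.mem_filter.2 ⟨hp, hgt⟩
        have hchar := (tail_char hA hkn p).1 hptail
        rw [Finset.mem_image]
        exact ⟨p.1, hchar.1, by
          apply Prod.ext
          · rfl
          · exact hchar.2.symm⟩
    · intro hp
      rcases hp with hp | hp
      · exact (Finset.mem_filter.1 hp).1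
      · rw [Finset.mem_image] at hp
        obtain ⟨v, hv, rfl⟩ := hp
        have := (tail_char hA hkn (v, oA (m+k) A +
          ((((A.filter (fun p => oA (m+k) A < p.2)).image Prod.fst)).filter
            (· ≤ v)).card)).2 ⟨hv, rfl⟩
        exact (Finset.mem_filter.1 this).1


lemma Sset_rec (m k : ℕ) (hm : 1 ≤ m) :
    (Sset (m+k) k).card = ∑ t ∈ Finset.range (k+1),
      (Sset (m+k-t-1) (k-t)).card * Nat.multichoose m t := by
  classical
  have hkn : k < m + k := by omega
  rw [Finset.card_eq_sum_card_fiberwise (f := fun A => m + k - oA (m+k) A)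
    (t := Finset.range (k+1))
    (fun A hA => Finset.mem_range.2 (by
      show m + k - oA (m+k) A < k + 1
      have := t_le_k hA hkn; omega))]
  apply Finset.sum_congr rfl
  intro t htr
  have htk : t ≤ k := by rw [Finset.mem_range] at htr; omega
  rw [Finset.card_eq_sum_card_fiberwise (f := fun A => A.filter (fun p => p.2 < m+k-t))
    (t := Sset (m+k-t-1) (k-t))
    (fun A hA => by
      rw [Finset.mem_coe, Finset.mem_filter] at hA
      exact (decomp hm hA.1 hA.2).2.2.1)]
  rw [Finset.sum_congr rfl (g := fun _ => Nat.multichoose m t), Finset.sum_const, smul_eq_mul,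
    mul_comm]
  intro A₀ hA₀
  -- the inner fiber is in bijection with Vset (m+k-t) t (A₀.image Prod.fst)
  have hU : A₀.image Prod.fst ⊆ Finset.Icc 1 (m+k-t-1) := by
    intro v hv
    rw [Finset.mem_image] at hv
    obtain ⟨p, hp, rfl⟩ := hv
    have := (mem_Sset_iff.1 hA₀).1 p hp
    rw [Finset.mem_Icc]
    omega
  have hUc : (A₀.image Prod.fst).card + m = m + k - t := by
    rw [card_lefts hA₀]
    omega
  rw [← Vset_card (m+k-t) t m (A₀.image Prod.fst) hm
    (by
      intro x hx
      have := hU hx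
      rw [Finset.mem_Icc] at this ⊢
      omega) hUc]
  apply Finset.card_bij' (fun A _ => (A.filter (fun p => m+k-t < p.2)).image Prod.fst)
    (fun V _ => A₀ ∪ V.image (fun v => (v, (m+k-t) + (V.filter (· ≤ v)).card)))
  · -- hi
    intro A hA
    rw [Finset.mem_filter, Finset.mem_filter] at hA
    obtain ⟨⟨hAS, hfib1⟩, hfib2⟩ := hA
    have hd := decomp hm hAS hfib1
    rw [← hfib2]
    exact hd.2.2.2.1
  · -- hj
    intro V hV
    have hr := recon hm htk hA₀ hV
    rw [Finset.mem_filter, Finset.mem_filter]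
    refine ⟨⟨hr.1, ?_⟩, ?_⟩
    · rw [hr.2.1]; omega
    · exact hr.2.2.1
  · -- left inverse
    intro A hA
    rw [Finset.mem_filter, Finset.mem_filter] at hA
    obtain ⟨⟨hAS, hfib1⟩, hfib2⟩ := hA
    have hd := decomp hm hAS hfib1
    conv_rhs => rw [hd.2.2.2.2]
    rw [hfib2]
  · -- right inverse
    intro V hV
    have hr := recon hm htk hA₀ hV
    rw [hr.2.2.2, Finset.image_image]
    have : (Prod.fst ∘ fun v => (v, (m+k-t) + (V.filter (· ≤ v)).card)) = id := rfl
    rw [this, Finset.image_id]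

lemma Sset_empty_k (k : ℕ) : (Sset (k+1) (k+1)).card = 0 := by
  rw [Finset.card_eq_zero]
  rw [Finset.eq_empty_iff_forall_notMem]
  intro A hA
  have h1 := card_rights hA
  have h2 : A.image Prod.snd ⊆ Finset.Icc 2 (k+1) := by
    intro j hj
    rw [Finset.mem_image] at hj
    obtain ⟨p, hp, rfl⟩ := hj
    have := (mem_Sset_iff.1 hA).1 p hp
    rw [Finset.mem_Icc]
    omega
  have := Finset.card_le_card h2
  rw [h1, Nat.card_Icc] at this
  omega

lemma Sset_zero : (Sset 0 0).card = 1 := by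
  rw [Finset.card_eq_one]
  refine ⟨∅, ?_⟩
  rw [Finset.eq_singleton_iff_unique_mem]
  constructor
  · rw [mem_Sset_iff]
    simp
  · intro A hA
    have := (mem_Sset_iff.1 hA).2.2.2.2
    exact Finset.card_eq_zero.1 this

lemma Sset_card_eq : ∀ m k, (Sset (m+k) k).card = Nat.multichoose (m*(m+1)/2) k := by
  intro m
  induction m with
  | zero =>
    intro k
    cases k with
    | zero => simpa using Sset_zero
    | succ k =>
      have h := Sset_empty_k k
      have : (0:ℕ) + (k+1) = k+1 := by omega
      rw [this, h]
      simp [Nat.multichoose_eq, Nat.choose_eq_zero_of_lt]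
  | succ m ihm =>
    intro k
    rw [Sset_rec (m+1) k (by omega)]
    have hterm : ∀ t ∈ Finset.range (k+1),
        (Sset (m+1+k-t-1) (k-t)).card * Nat.multichoose (m+1) t
        = Nat.multichoose (m+1) t * Nat.multichoose (m*(m+1)/2) (k-t) := by
      intro t htr
      rw [Finset.mem_range] at htr
      have harith : m+1+k-t-1 = m + (k-t) := by omega
      rw [harith, ihm (k-t), mul_comm]
    rw [Finset.sum_congr rfl hterm, mc_vand (m+1) (m*(m+1)/2) k]
    congr 1
    have h2 : (m+1)*(m+1+1) = m*(m+1) + (m+1)*2 := by ring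
    rw [h2, Nat.add_mul_div_right _ _ (by norm_num : (0:ℕ) < 2)]
    omega


noncomputable def arcsOf {n : ℕ} (P : Finpartition (Finset.Icc 1 n)) : Finset (ℕ × ℕ) :=
  @Finset.filter _ (fun a => IsArc P a) (Classical.decPred _)
    (Finset.Icc 1 n ×ˢ Finset.Icc 1 n)

lemma mem_arcsOf {n : ℕ} {P : Finpartition (Finset.Icc 1 n)} {a : ℕ × ℕ} :
    a ∈ arcsOf P ↔ IsArc P a := by
  classical
  rw [arcsOf]
  rw [Finset.mem_filter]
  constructor
  · exact fun h => h.2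
  · intro h
    refine ⟨?_, h⟩
    obtain ⟨hlt, B, hB, h1, h2, -⟩ := h
    have hsub : B ⊆ Finset.Icc 1 n := P.le hB
    rw [Finset.mem_product]
    exact ⟨hsub h1, hsub h2⟩

lemma coe_arcsOf {n : ℕ} (P : Finpartition (Finset.Icc 1 n)) :
    {a : ℕ × ℕ | IsArc P a} = ↑(arcsOf P) := by
  ext a
  rw [Set.mem_setOf_eq, Finset.mem_coe, mem_arcsOf]

lemma numArcs_eq {n : ℕ} (P : Finpartition (Finset.Icc 1 n)) :
    numArcs P = (arcsOf P).card := by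
  rw [numArcs, coe_arcsOf, Set.ncard_coe_finset]

lemma isArc_right_unique {n : ℕ} {P : Finpartition (Finset.Icc 1 n)} {i j j' : ℕ}
    (h : IsArc P (i, j)) (h' : IsArc P (i, j')) : j = j' := by
  obtain ⟨hlt, B, hB, hi, hj, hno⟩ := h
  obtain ⟨hlt', B', hB', hi', hj', hno'⟩ := h'
  simp only at hlt hlt' hi hj hno hi' hj' hno'
  have hBB : B = B' := P.eq_of_mem_parts hB hB' hi hi'
  subst hBB
  rcases lt_trichotomy j j' with hc | hc | hc
  · exact absurd ⟨hlt, hc⟩ (hno' j hj)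
  · exact hc
  · exact absurd ⟨hlt', hc⟩ (hno j' hj')

lemma isArc_left_unique {n : ℕ} {P : Finpartition (Finset.Icc 1 n)} {i i' j : ℕ}
    (h : IsArc P (i, j)) (h' : IsArc P (i', j)) : i = i' := by
  obtain ⟨hlt, B, hB, hi, hj, hno⟩ := h
  obtain ⟨hlt', B', hB', hi', hj', hno'⟩ := h'
  simp only at hlt hlt' hi hj hno hi' hj' hno'
  have hBB : B = B' := P.eq_of_mem_parts hB hB' hj hj'
  subst hBB
  rcases lt_trichotomy i i' with hc | hc | hc
  · exact absurd ⟨hc, hlt'⟩ (hno i' hi')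
  · exact hc
  · exact absurd ⟨hc, hlt⟩ (hno' i hi)

def SameB {n : ℕ} (P : Finpartition (Finset.Icc 1 n)) (x y : ℕ) : Prop :=
  ∃ B ∈ P.parts, x ∈ B ∧ y ∈ B

lemma block_chain {n : ℕ} (P : Finpartition (Finset.Icc 1 n)) {B : Finset ℕ}
    (hB : B ∈ P.parts) :
    ∀ d x y, x ∈ B → y ∈ B → y - x = d → x ≤ y →
      Relation.ReflTransGen (fun u v => IsArc P (u, v)) x y := by
  intro d
  induction d using Nat.strong_induction_on with
  | _ d ih =>
    intro x y hx hy hd hxy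
    rcases eq_or_lt_of_le hxy with rfl | hlt
    · exact Relation.ReflTransGen.refl
    · have hCne : y ∈ B.filter (fun c => x < c ∧ c ≤ y) :=
        Finset.mem_filter.2 ⟨hy, hlt, le_refl _⟩
      set C := B.filter (fun c => x < c ∧ c ≤ y) with hC
      have hCne' : C.Nonempty := ⟨y, hCne⟩
      set c := C.min' hCne' with hc
      have hcC : c ∈ C := C.min'_mem hCne'
      rw [hC, Finset.mem_filter] at hcC
      obtain ⟨hcB, hxc, hcy⟩ := hcC
      have harc : IsArc P (x, c) := by
        refine ⟨hxc, B, hB, hx, hcB, ?_⟩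
        intro e he
        rintro ⟨h1, h2⟩
        have heC : e ∈ C := Finset.mem_filter.2 ⟨he, h1, by omega⟩
        have := C.min'_le e heC
        omega
      have hrest : Relation.ReflTransGen (fun u v => IsArc P (u, v)) c y := by
        apply ih (y - c) (by omega) c y hcB hy rfl hcy
      exact Relation.ReflTransGen.head harc hrest

lemma sameB_of_rtg {n : ℕ} {P : Finpartition (Finset.Icc 1 n)} {x y : ℕ}
    (hx : x ∈ Finset.Icc 1 n)
    (h : Relation.ReflTransGen (fun u v => IsArc P (u, v)) x y) : SameB P x y := by
  induction h with
  | refl =>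
    obtain ⟨B, hB, hxB⟩ := P.exists_mem hx
    exact ⟨B, hB, hxB, hxB⟩
  | tail hxc harc ih =>
    obtain ⟨B, hB, hxB, hcB⟩ := ih
    obtain ⟨hlt, B', hB', hcB', hyB', -⟩ := harc
    have : B = B' := P.eq_of_mem_parts hB hB' hcB hcB'
    exact ⟨B, hB, hxB, this ▸ hyB'⟩

lemma sameB_iff {n : ℕ} {P : Finpartition (Finset.Icc 1 n)} {x y : ℕ} (hxy : x ≤ y) :
    SameB P x y ↔ (x ∈ Finset.Icc 1 n ∧
      Relation.ReflTransGen (fun u v => IsArc P (u, v)) x y) := by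
  constructor
  · rintro ⟨B, hB, hxB, hyB⟩
    exact ⟨P.le hB hxB, block_chain P hB (y - x) x y hxB hyB rfl hxy⟩
  · rintro ⟨hx, h⟩
    exact sameB_of_rtg hx h

lemma sameB_symm {n : ℕ} {P : Finpartition (Finset.Icc 1 n)} {x y : ℕ}
    (h : SameB P x y) : SameB P y x := by
  obtain ⟨B, hB, h1, h2⟩ := h
  exact ⟨B, hB, h2, h1⟩

lemma parts_subset_of_sameB {n : ℕ} {P P' : Finpartition (Finset.Icc 1 n)}
    (hsb : ∀ x y, SameB P x y ↔ SameB P' x y) :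
    ∀ B ∈ P.parts, B ∈ P'.parts := by
  intro B hB
  obtain ⟨x, hx⟩ := P.nonempty_of_mem_parts hB
  have hxI : x ∈ Finset.Icc 1 n := P.le hB hx
  obtain ⟨B', hB', hxB'⟩ := P'.exists_mem hxI
  have : B = B' := by
    ext y
    constructor
    · intro hy
      obtain ⟨B'', hB'', hxB'', hyB''⟩ := (hsb x y).1 ⟨B, hB, hx, hy⟩
      have : B'' = B' := P'.eq_of_mem_parts hB'' hB' hxB'' hxB'
      exact this ▸ hyB''
    · intro hy
      obtain ⟨B'', hB'', hxB'', hyB''⟩ := (hsb x y).2 ⟨B', hB', hxB', hy⟩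
      have : B'' = B := P.eq_of_mem_parts hB'' hB hxB'' hx
      exact this ▸ hyB''
  exact this ▸ hB'

lemma arcsOf_injective {n : ℕ} {P P' : Finpartition (Finset.Icc 1 n)}
    (h : arcsOf P = arcsOf P') : P = P' := by
  have harc : ∀ a, IsArc P a = IsArc P' a := by
    intro a
    rw [eq_iff_iff, ← mem_arcsOf, ← mem_arcsOf, h]
  have hrel : (fun u v => IsArc P (u, v)) = (fun u v => IsArc P' (u, v)) := by
    funext u v
    exact harc (u, v)
  have hsb : ∀ x y, SameB P x y ↔ SameB P' x y := by
    have key : ∀ x y, x ≤ y → (SameB P x y ↔ SameB P' x y) := by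
      intro x y hxy
      rw [sameB_iff hxy, sameB_iff hxy, hrel]
    intro x y
    rcases le_total x y with hxy | hxy
    · exact key x y hxy
    · constructor
      · intro hs
        exact sameB_symm ((key y x hxy).1 (sameB_symm hs))
      · intro hs
        exact sameB_symm ((key y x hxy).2 (sameB_symm hs))
  apply Finpartition.ext
  apply Finset.Subset.antisymm
  · exact fun B hB => parts_subset_of_sameB hsb B hB
  · exact fun B hB => parts_subset_of_sameB (fun x y => (hsb x y).symm) B hB


lemma dia1 {α : Type*} {r : α → α → Prop} (hdet : ∀ a b c, r a b → r a c → b = c) :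
    ∀ {a b c : α}, Relation.ReflTransGen r a b → Relation.ReflTransGen r a c →
      Relation.ReflTransGen r b c ∨ Relation.ReflTransGen r c b := by
  intro a b c hab
  induction hab using Relation.ReflTransGen.head_induction_on with
  | refl => exact fun hac => Or.inl hac
  | head hstep hrest ih =>
    intro hac
    rcases hac.cases_head with rfl | ⟨d, hd, hdc⟩
    · exact Or.inr (Relation.ReflTransGen.head hstep hrest)
    · have hyd := hdet _ _ _ hstep hd
      exact ih (hyd ▸ hdc)

lemma dia2 {α : Type*} {r : α → α → Prop} (hcodet : ∀ a b c, r a c → r b c → a = b) :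
    ∀ {a b c : α}, Relation.ReflTransGen r b a → Relation.ReflTransGen r c a →
      Relation.ReflTransGen r b c ∨ Relation.ReflTransGen r c b := by
  intro a b c hba
  induction hba with
  | refl => exact fun hca => Or.inr hca
  | tail hba' hstep ih =>
    intro hca
    rcases hca.cases_tail with rfl | ⟨d, hcd, hd⟩
    · exact Or.inl (Relation.ReflTransGen.tail hba' hstep)
    · have := hcodet _ _ _ hd hstep
      exact ih (this ▸ hcd)

lemma comparable_of_eqvGen {α : Type*} {r : α → α → Prop}
    (hdet : ∀ a b c, r a b → r a c → b = c)
    (hcodet : ∀ a b c, r a c → r b c → a = b)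
    {x y : α} (h : Relation.EqvGen r x y) :
    Relation.ReflTransGen r x y ∨ Relation.ReflTransGen r y x := by
  induction h with
  | rel x y h => exact Or.inl (Relation.ReflTransGen.single h)
  | refl x => exact Or.inl Relation.ReflTransGen.refl
  | symm x y h ih => exact ih.symm
  | trans x y z h1 h2 ih1 ih2 =>
    rcases ih1 with h1' | h1' <;> rcases ih2 with h2' | h2'
    · exact Or.inl (h1'.trans h2')
    · exact dia2 hcodet h1' h2'
    · exact dia1 hdet h1' h2'
    · exact Or.inr (h2'.trans h1')

noncomputable def partOf (n : ℕ) (A : Finset (ℕ × ℕ)) : Finpartition (Finset.Icc 1 n) where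
  parts := (Finset.Icc 1 n).image (fun x =>
    @Finset.filter _ (fun y => Relation.EqvGen (fun u v => (u, v) ∈ A) x y)
      (Classical.decPred _) (Finset.Icc 1 n))
  supIndep := by
    classical
    rw [Finset.supIndep_iff_pairwiseDisjoint]
    intro B hB B' hB' hne
    rw [Finset.mem_coe, Finset.mem_image] at hB hB'
    obtain ⟨x, hx, rfl⟩ := hB
    obtain ⟨x', hx', rfl⟩ := hB'
    rw [Function.onFun]
    rw [Finset.disjoint_left]
    intro z hz hz'
    simp only [id_eq] at hz hz'
    rw [Finset.mem_filter] at hz hz'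
    have hE := Relation.EqvGen.is_equivalence (fun u v => (u, v) ∈ A)
    have hxx' : Relation.EqvGen (fun u v => (u, v) ∈ A) x x' :=
      hE.trans hz.2 (hE.symm hz'.2)
    apply hne
    ext y
    rw [Finset.mem_filter, Finset.mem_filter]
    constructor
    · rintro ⟨hy, hEy⟩
      exact ⟨hy, hE.trans (hE.symm hxx') hEy⟩
    · rintro ⟨hy, hEy⟩
      exact ⟨hy, hE.trans hxx' hEy⟩
  sup_parts := by
    classical
    apply le_antisymm
    · apply Finset.sup_le
      intro B hB
      rw [Finset.mem_image] at hB
      obtain ⟨x, hx, rfl⟩ := hB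
      exact Finset.filter_subset _ _
    · intro x hx
      rw [Finset.mem_sup]
      refine ⟨_, Finset.mem_image_of_mem _ hx, ?_⟩
      simp only [id_eq]
      rw [Finset.mem_filter]
      exact ⟨hx, Relation.EqvGen.refl x⟩
  bot_notMem := by
    classical
    intro h
    rw [Finset.mem_image] at h
    obtain ⟨x, hx, hBx⟩ := h
    have : x ∈ (⊥ : Finset ℕ) := by
      rw [← hBx, Finset.mem_filter]
      exact ⟨hx, Relation.EqvGen.refl x⟩
    simp at this

lemma isArc_partOf {n k : ℕ} {A : Finset (ℕ × ℕ)} (hA : A ∈ Sset n k) (a : ℕ × ℕ) :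
    IsArc (partOf n A) a ↔ a ∈ A := by
  classical
  obtain ⟨hb, h2, h3, h4, hc⟩ := mem_Sset_iff.1 hA
  have hdet : ∀ x y z, (x,y) ∈ A → (x,z) ∈ A → y = z := fun x y z hy hz => by
    have := h2 (x,y) hy (x,z) hz rfl
    exact congrArg Prod.snd this
  have hcodet : ∀ x y z, (x,z) ∈ A → (y,z) ∈ A → x = y := fun x y z hxz hyz => by
    have := h3 (x,z) hxz (y,z) hyz rfl
    exact congrArg Prod.fst this
  have hdet' : ∀ x y z : ℕ, (fun u v => (u,v) ∈ A) x y → (fun u v => (u,v) ∈ A) x z → y = z :=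
    hdet
  have hcodet' : ∀ x y z : ℕ, (fun u v => (u,v) ∈ A) x z → (fun u v => (u,v) ∈ A) y z → x = y :=
    fun x y z h1 h1' => hcodet x y z h1 h1'
  have hEq := Relation.EqvGen.is_equivalence (fun u v => (u,v) ∈ A)
  have hrtg_le : ∀ {x y : ℕ}, Relation.ReflTransGen (fun u v => (u,v) ∈ A) x y → x ≤ y := by
    intro x y h
    induction h with
    | refl => exact le_refl _
    | tail h1 h2 ih =>
      have := (hb _ h2).2.1
      omega
  constructor
  · rintro ⟨hlt, B, hB, h1m, h2m, hno⟩
    simp only [partOf, Finset.mem_image] at hB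
    obtain ⟨x, hx, rfl⟩ := hB
    rw [Finset.mem_filter] at h1m h2m
    have hE12 : Relation.EqvGen (fun u v => (u,v) ∈ A) a.1 a.2 :=
      hEq.trans (hEq.symm h1m.2) h2m.2
    have hcomp := comparable_of_eqvGen hdet' hcodet' hE12
    have hR : Relation.ReflTransGen (fun u v => (u,v) ∈ A) a.1 a.2 := by
      rcases hcomp with h | h
      · exact h
      · have := hrtg_le h
        omega
    rcases hR.cases_head with heq | ⟨d, hd, hdc⟩
    · omega
    · have hdlt : a.1 < d := (hb _ hd).2.1
      have hdle : d ≤ a.2 := hrtg_le hdc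
      have hdB : d ∈ @Finset.filter _
          (fun y => Relation.EqvGen (fun u v => (u, v) ∈ A) x y)
          (Classical.decPred _) (Finset.Icc 1 n) := by
        rw [Finset.mem_filter, Finset.mem_Icc]
        have hd1 := (hb _ hd).1
        have hdn := (hb _ hd).2.2
        exact ⟨⟨by omega, hdn⟩, hEq.trans h1m.2 (Relation.EqvGen.rel _ _ hd)⟩
      have hnod := hno d hdB
      have hda : d = a.2 := by
        by_contra hcon
        exact hnod ⟨hdlt, by omega⟩
      rw [hda] at hd
      rw [Prod.mk.eta] at hd
      exact hd
  · intro haA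
    have hbnd := hb a haA
    have haA' : (a.1, a.2) ∈ A := by rw [Prod.mk.eta]; exact haA
    refine ⟨hbnd.2.1, @Finset.filter _
        (fun y => Relation.EqvGen (fun u v => (u, v) ∈ A) a.1 y)
        (Classical.decPred _) (Finset.Icc 1 n), ?_, ?_, ?_, ?_⟩
    · simp only [partOf, Finset.mem_image]
      exact ⟨a.1, Finset.mem_Icc.2 ⟨hbnd.1, by omega⟩, rfl⟩
    · rw [Finset.mem_filter, Finset.mem_Icc]
      exact ⟨⟨hbnd.1, by omega⟩, Relation.EqvGen.refl _⟩
    · rw [Finset.mem_filter, Finset.mem_Icc]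
      exact ⟨⟨by omega, hbnd.2.2⟩, Relation.EqvGen.rel _ _ haA'⟩
    · intro c hcB
      rintro ⟨hc1, hc2⟩
      rw [Finset.mem_filter] at hcB
      have hcomp := comparable_of_eqvGen hdet' hcodet' hcB.2
      have hR : Relation.ReflTransGen (fun u v => (u,v) ∈ A) a.1 c := by
        rcases hcomp with h | h
        · exact h
        · have := hrtg_le h
          omega
      rcases hR.cases_head with heq | ⟨d, hd, hdc⟩
      · omega
      · have : d = a.2 := hdet _ _ _ hd haA'
        rw [this] at hdc
        have := hrtg_le hdc
        omega

lemma arcsOf_partOf {n k : ℕ} {A : Finset (ℕ × ℕ)} (hA : A ∈ Sset n k) :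
    arcsOf (partOf n A) = A := by
  ext a
  rw [mem_arcsOf, isArc_partOf hA]

lemma arcsOf_mem_Sset {n k : ℕ} {P : Finpartition (Finset.Icc 1 n)}
    (hk : numArcs P = k) (hrn : ¬ HasRightNesting P) : arcsOf P ∈ Sset n k := by
  rw [mem_Sset_iff]
  refine ⟨?_, ?_, ?_, ?_, ?_⟩
  · intro p hp
    have harc := mem_arcsOf.1 hp
    obtain ⟨hlt, B, hB, h1, h2, -⟩ := harc
    have hsub : B ⊆ Finset.Icc 1 n := P.le hB
    have := Finset.mem_Icc.1 (hsub h1)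
    have := Finset.mem_Icc.1 (hsub h2)
    omega
  · intro p hp q hq h
    have harcp := mem_arcsOf.1 hp
    have harcq := mem_arcsOf.1 hq
    have harcp' : IsArc P (p.1, p.2) := by rwa [Prod.mk.eta]
    have harcq' : IsArc P (p.1, q.2) := by rw [h]; rwa [Prod.mk.eta]
    have := isArc_right_unique harcp' harcq'
    exact Prod.ext h this
  · intro p hp q hq h
    have harcp := mem_arcsOf.1 hp
    have harcq := mem_arcsOf.1 hq
    have harcp' : IsArc P (p.1, p.2) := by rwa [Prod.mk.eta]
    have harcq' : IsArc P (q.1, p.2) := by rw [h]; rwa [Prod.mk.eta]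
    have := isArc_left_unique harcp' harcq'
    exact Prod.ext this h
  · intro p hp q hq h
    intro hcon
    exact hrn ⟨q, p, mem_arcsOf.1 hq, mem_arcsOf.1 hp, hcon, h⟩
  · rw [← numArcs_eq, hk]

lemma props_of_arcsOf_mem {n k : ℕ} {P : Finpartition (Finset.Icc 1 n)}
    (h : arcsOf P ∈ Sset n k) : numArcs P = k ∧ ¬ HasRightNesting P := by
  rw [mem_Sset_iff] at h
  constructor
  · rw [numArcs_eq]
    exact h.2.2.2.2
  · rintro ⟨a, b, ha, hb, h1, h2⟩
    exact h.2.2.2.1 b (mem_arcsOf.2 hb) a (mem_arcsOf.2 ha) h2 h1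

theorem Tnum_eq_Sset (n k : ℕ) : Tnum n k = (Sset n k).card := by
  classical
  have himg : arcsOf '' {P : Finpartition (Finset.Icc 1 n) |
      numArcs P = k ∧ ¬ HasRightNesting P} = ↑(Sset n k) := by
    ext A
    constructor
    · rintro ⟨P, ⟨hk, hrn⟩, rfl⟩
      exact arcsOf_mem_Sset hk hrn
    · intro hA
      rw [Finset.mem_coe] at hA
      refine ⟨partOf n A, ?_, arcsOf_partOf hA⟩
      have := props_of_arcsOf_mem (P := partOf n A) (by rw [arcsOf_partOf hA]; exact hA)
      exact this
  have hinj : Set.InjOn arcsOf {P : Finpartition (Finset.Icc 1 n) |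
      numArcs P = k ∧ ¬ HasRightNesting P} :=
    fun P _ P' _ h => arcsOf_injective h
  rw [Tnum, ← Set.ncard_image_of_injOn hinj, himg, Set.ncard_coe_finset]

end AuxProof

/-- `T(n,k) = C( C(n-k+1, 2) + k - 1, k )`. -/
theorem stmt_12 (n k : ℕ) (hn : 1 ≤ n) (hk : k ≤ n - 1) :
    Tnum n k = Nat.choose ((n - k) * (n - k + 1) / 2 + k - 1) k := by
  have hnk : n = (n - k) + k := by omega
  rw [Tnum_eq_Sset]
  have h := Sset_card_eq (n - k) k
  rw [← hnk] at h
  rw [h, Nat.multichoose_eq]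
end
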